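/- arXiv:1409.4195 — 13 statements merged into one kernel-verified Lean document; each statement's English description precedes it below -/
import Mathlib

section
/- Let A : X → X be a linear operator on a complex Banach space X equipped with a semi-inner product [·,·] compatible with the norm. If R(A) ∩ N(A) ≠ {0}, then the cosine of A, defined as cos A = inf{Re[Ax, x]/(‖Ax‖ ‖x‖) : x ∉ N(A)}, equals −1 (equivalently, the angle φ(A) = arccos(cos A) equals π). -/
/-- A semi-inner product compatible with the norm of a complex normed space. -/
structure SemiInnerProduct (X : Type*) [NormedAddCommGroup X] [NormedSpace ℂ X] where
  sip : X → X → ℂ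
  add_left : ∀ x y z : X, sip (x + y) z = sip x z + sip y z
  smul_left : ∀ (a : ℂ) (x y : X), sip (a • x) y = a * sip x y
  norm_sq : ∀ x : X, sip x x = (‖x‖ : ℂ) ^ 2
  abs_le : ∀ x y : X, ‖sip x y‖ ≤ ‖x‖ * ‖y‖

/-- If `R(A) ∩ N(A) ≠ {0}`, then `cos A = -1`, i.e. the angle of `A` is `π`. -/
theorem cos_eq_neg_one_of_range_inter_ker_ne_bot
    (X : Type*) [NormedAddCommGroup X] [NormedSpace ℂ X] [CompleteSpace X]
    (sip : SemiInnerProduct X) (A : X →ₗ[ℂ] X)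
    (h : LinearMap.range A ⊓ LinearMap.ker A ≠ ⊥) :
    sInf {r : ℝ | ∃ x : X, x ∉ LinearMap.ker A ∧
      r = (sip.sip (A x) x).re / (‖A x‖ * ‖x‖)} = -1 := by
  set S := {r : ℝ | ∃ x : X, x ∉ LinearMap.ker A ∧
      r = (sip.sip (A x) x).re / (‖A x‖ * ‖x‖)} with hS
  obtain ⟨y, hy, hy0⟩ := (Submodule.ne_bot_iff _).mp h
  obtain ⟨hyr, hyk⟩ := Submodule.mem_inf.mp hy
  obtain ⟨w, hw⟩ := hyr
  have hAy : A y = 0 := hyk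
  have hny : (0:ℝ) < ‖y‖ := norm_pos_iff.mpr hy0
  -- lower bound: every element of S is ≥ -1
  have hlb : ∀ r ∈ S, (-1:ℝ) ≤ r := by
    rintro r ⟨x, hx, rfl⟩
    have hAx : A x ≠ 0 := fun h' => hx (LinearMap.mem_ker.mpr h')
    have hx0 : x ≠ 0 := by rintro rfl; exact hAx (map_zero A)
    have hpos : 0 < ‖A x‖ * ‖x‖ :=
      mul_pos (norm_pos_iff.mpr hAx) (norm_pos_iff.mpr hx0)
    rw [le_div_iff₀ hpos]
    have h1 : |(sip.sip (A x) x).re| ≤ ‖sip.sip (A x) x‖ :=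
      Complex.abs_re_le_norm _
    have h2 := sip.abs_le (A x) x
    have h3 := abs_le.mp (le_trans h1 h2)
    linarith [h3.1]
  have hbdd : BddBelow S := ⟨-1, hlb⟩
  have hwk : w ∉ LinearMap.ker A := by
    intro hk
    exact hy0 (hw ▸ LinearMap.mem_ker.mp hk)
  have hne : S.Nonempty := ⟨_, w, hwk, rfl⟩
  refine le_antisymm ?_ (le_csInf hne hlb)
  refine le_of_forall_pos_le_add ?_
  intro ε hε
  set t : ℝ := 2 * ‖w‖ / (ε * ‖y‖) + 1 with ht_def
  have ht : 0 < t := by positivity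
  set x : X := w - (t : ℂ) • y with hx_def
  have hAx : A x = y := by
    simp [hx_def, map_sub, map_smul, hw, hAy]
  have hxk : x ∉ LinearMap.ker A := by
    intro hk
    exact hy0 (hAx ▸ LinearMap.mem_ker.mp hk)
  have hx0 : x ≠ 0 := by
    intro h0
    apply hy0; rw [← hAx, h0, map_zero]
  have hnx : (0:ℝ) < ‖x‖ := norm_pos_iff.mpr hx0
  have hmem : (sip.sip (A x) x).re / (‖A x‖ * ‖x‖) ∈ S := ⟨x, hxk, rfl⟩
  refine le_trans (csInf_le hbdd hmem) ?_
  rw [hAx]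
  -- key identity : t * sip y x = sip w x - ‖x‖^2
  have hkey : (t : ℂ) * sip.sip y x = sip.sip w x - (‖x‖ : ℂ) ^ 2 := by
    have h1 : x + (t : ℂ) • y = w := by rw [hx_def]; abel
    have h2 : sip.sip (x + (t : ℂ) • y) x = sip.sip x x + (t : ℂ) * sip.sip y x := by
      rw [sip.add_left, sip.smul_left]
    rw [h1, sip.norm_sq] at h2
    rw [h2]; ring
  have hre : t * (sip.sip y x).re = (sip.sip w x).re - ‖x‖ ^ 2 := by
    have := congrArg Complex.re hkey
    simpa [Complex.sub_re, Complex.re_ofReal_mul, ← Complex.ofReal_pow, Complex.ofReal_re] using this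
  have hwx : (sip.sip w x).re ≤ ‖w‖ * ‖x‖ := by
    have h1 : |(sip.sip w x).re| ≤ ‖sip.sip w x‖ := Complex.abs_re_le_norm _
    have h2 := sip.abs_le w x
    have := (abs_le.mp (le_trans h1 h2)).2
    linarith
  have hxlow : t * ‖y‖ - ‖w‖ ≤ ‖x‖ := by
    have h1 : ‖(t : ℂ) • y‖ = t * ‖y‖ := by
      rw [norm_smul]
      simp [abs_of_pos ht]
    have h2 : ‖(t : ℂ) • y‖ ≤ ‖w‖ + ‖x‖ := by
      have : (t : ℂ) • y = w - x := by rw [hx_def]; abel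
      rw [this]
      exact norm_sub_le _ _
    linarith
  have htny : ε * (t * ‖y‖) = 2 * ‖w‖ + ε * ‖y‖ := by
    rw [ht_def]
    field_simp
  rw [div_le_iff₀ (mul_pos hny hnx)]
  have hre' : (sip.sip y x).re = ((sip.sip w x).re - ‖x‖ ^ 2) / t := by
    field_simp
    linarith [hre]
  rw [hre', div_le_iff₀ ht]
  nlinarith [mul_pos hny hnx, mul_pos ht hny, mul_le_mul_of_nonneg_left hxlow (le_of_lt hnx),
    mul_nonneg (le_of_lt hε) (norm_nonneg y), norm_nonneg w,
    mul_le_mul_of_nonneg_right hxlow (le_of_lt hε)]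
end

section
/- If A is a linear operator on a complex Banach space X whose angle satisfies φ(A) < π (i.e., cos A > −1), then N(A²) = N(A), i.e., the ascent of A is at most 1; equivalently R(A) ∩ N(A) = {0}. -/
/-- If the angle of `A` is less than `π` (i.e. `cos A > -1`), then the ascent of `A` is at
most `1`: `N(A²) = N(A)`, equivalently `R(A) ∩ N(A) = {0}`. -/
theorem ascent_le_one_of_angle_lt_pi
    (X : Type*) [NormedAddCommGroup X] [NormedSpace ℂ X] [CompleteSpace X]
    (sip : SemiInnerProduct X) (A : X →ₗ[ℂ] X)
    (h : -1 < sInf {r : ℝ | ∃ x : X, x ∉ LinearMap.ker A ∧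
      r = (sip.sip (A x) x).re / (‖A x‖ * ‖x‖)}) :
    LinearMap.ker (A ∘ₗ A) = LinearMap.ker A ∧
    LinearMap.range A ⊓ LinearMap.ker A = ⊥ := by
  set S := {r : ℝ | ∃ x : X, x ∉ LinearMap.ker A ∧
      r = (sip.sip (A x) x).re / (‖A x‖ * ‖x‖)} with hS
  have hbdd : BddBelow S := by
    refine ⟨-1, ?_⟩
    rintro r ⟨x, hx, rfl⟩
    have hAx : A x ≠ 0 := by simpa [LinearMap.mem_ker] using hx
    have hx0 : x ≠ 0 := by rintro rfl; exact hAx (map_zero A)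
    have hnum : -(‖A x‖ * ‖x‖) ≤ (sip.sip (A x) x).re := by
      have h1 : |(sip.sip (A x) x).re| ≤ ‖sip.sip (A x) x‖ :=
        Complex.abs_re_le_norm _
      have h2 := sip.abs_le (A x) x
      have := abs_le.mp (h1.trans h2)
      linarith [this.1]
    have hpos : 0 < ‖A x‖ * ‖x‖ :=
      mul_pos (norm_pos_iff.mpr hAx) (norm_pos_iff.mpr hx0)
    rw [le_div_iff₀ hpos]
    linarith
  have key : ∀ x : X, A (A x) = 0 → A x = 0 := by
    intro x hAAx
    by_contra hy
    obtain ⟨y, hy'⟩ : ∃ y : X, y = A x := ⟨A x, rfl⟩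
    rw [← hy'] at hy hAAx
    have hynorm : 0 < ‖y‖ := norm_pos_iff.mpr hy
    obtain ⟨c, hc⟩ : ∃ c : ℝ, c = sInf S := ⟨_, rfl⟩
    rw [← hc] at h
    have hc1 : 0 < c + 1 := by linarith
    obtain ⟨t, ht⟩ : ∃ t : ℝ, t = 2 * ‖x‖ / (‖y‖ * (c + 1)) + 1 := ⟨_, rfl⟩
    have htnn : 0 ≤ 2 * ‖x‖ / (‖y‖ * (c + 1)) :=
      div_nonneg (by positivity) (by positivity)
    have htpos : 0 < t := by rw [ht]; linarith
    obtain ⟨z, hz⟩ : ∃ z : X, z = x + (-(t : ℂ)) • y := ⟨_, rfl⟩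
    have hAz : A z = y := by
      rw [hz, map_add, map_smul, ← hy', hAAx, smul_zero, add_zero]
    have hzker : z ∉ LinearMap.ker A := by
      simp [LinearMap.mem_ker, hAz, hy]
    have hz0 : z ≠ 0 := by
      intro h0
      exact hy (by rw [← hAz, h0, map_zero])
    have hznorm : 0 < ‖z‖ := norm_pos_iff.mpr hz0
    have hzge : t * ‖y‖ - ‖x‖ ≤ ‖z‖ := by
      have hns : ‖(-(t : ℂ)) • y‖ = t * ‖y‖ := by
        rw [norm_smul, norm_neg, Complex.norm_real, Real.norm_eq_abs, abs_of_pos htpos]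
      have h1 := norm_sub_norm_le ((-(t : ℂ)) • y) (-x)
      rw [sub_neg_eq_add, norm_neg, hns] at h1
      rw [hz, add_comm]
      linarith
    -- semi-inner product computation
    have hsum : sip.sip z z = sip.sip x z + (-(t : ℂ)) * sip.sip y z := by
      rw [hz, sip.add_left, sip.smul_left]
    have hnz : sip.sip z z = (‖z‖ : ℂ) ^ 2 := sip.norm_sq z
    have hre : ‖z‖ ^ 2 = (sip.sip x z).re - t * (sip.sip y z).re := by
      have h2 := congrArg Complex.re (hnz.symm.trans hsum)
      simp only [Complex.add_re, Complex.mul_re, Complex.neg_re, Complex.neg_im,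
        Complex.ofReal_re, Complex.ofReal_im, ← Complex.ofReal_pow] at h2
      rw [h2]; ring
    have hxz : (sip.sip x z).re ≤ ‖x‖ * ‖z‖ := by
      calc (sip.sip x z).re ≤ |((sip.sip x z).re)| := le_abs_self _
      _ ≤ ‖sip.sip x z‖ := Complex.abs_re_le_norm _
      _ ≤ ‖x‖ * ‖z‖ := sip.abs_le x z
    have hrS : (sip.sip (A z) z).re / (‖A z‖ * ‖z‖) ∈ S := ⟨z, hzker, rfl⟩
    have hcr : c ≤ (sip.sip (A z) z).re / (‖A z‖ * ‖z‖) := hc ▸ csInf_le hbdd hrS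
    rw [hAz] at hcr
    have hyznorm : 0 < ‖y‖ * ‖z‖ := mul_pos hynorm hznorm
    have hcr' : c * (‖y‖ * ‖z‖) ≤ (sip.sip y z).re := (le_div_iff₀ hyznorm).mp hcr
    have hmain : t * (c * (‖y‖ * ‖z‖)) ≤ ‖x‖ * ‖z‖ - ‖z‖ ^ 2 := by
      have h1 : t * (c * (‖y‖ * ‖z‖)) ≤ t * (sip.sip y z).re :=
        mul_le_mul_of_nonneg_left hcr' htpos.le
      linarith
    have hdiv : t * c * ‖y‖ ≤ 2 * ‖x‖ - t * ‖y‖ := by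
      have h2 : t * c * ‖y‖ * ‖z‖ ≤ (‖x‖ - ‖z‖) * ‖z‖ := by nlinarith [hmain]
      have h3 : t * c * ‖y‖ ≤ ‖x‖ - ‖z‖ := le_of_mul_le_mul_right (by linarith) hznorm
      linarith
    have hfinal : t * (‖y‖ * (c + 1)) ≤ 2 * ‖x‖ := by nlinarith
    have htval : t * (‖y‖ * (c + 1)) = 2 * ‖x‖ + ‖y‖ * (c + 1) := by
      rw [ht, add_mul, one_mul, div_mul_cancel₀]
      positivity
    nlinarith [mul_pos hynorm hc1]
  constructor
  · ext u
    simp only [LinearMap.mem_ker, LinearMap.comp_apply]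
    exact ⟨fun hu => key u hu, fun hu => by rw [hu, map_zero]⟩
  · rw [eq_bot_iff]
    rintro u ⟨⟨v, rfl⟩, hu⟩
    simpa using key v hu
end

section
/- If A is an accretive linear operator on a complex Banach space X (i.e., Re[Ax, x] ≥ 0 for all x, for some compatible semi-inner product), then its ascent is at most 1, i.e., R(A) ∩ N(A) = {0}. -/
lemma accretive_key
    (X : Type*) [NormedAddCommGroup X] [NormedSpace ℂ X]
    (sip : SemiInnerProduct X) (A : X →ₗ[ℂ] X)
    (h : ∀ x : X, 0 ≤ (sip.sip (A x) x).re)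
    (x : X) (hx : A (A x) = 0) : A x = 0 := by
  set y := A x with hy
  -- main estimate: for every t > 0, t * ‖y‖ ≤ 2 * ‖x‖
  have main : ∀ t : ℝ, 0 < t → t * ‖y‖ ≤ 2 * ‖x‖ := by
    intro t ht
    set w := x - (t : ℂ) • y with hw
    have hAw : A w = y := by
      simp [hw, map_sub, map_smul, hx, hy]; exact Or.inr hx
    have h1 : 0 ≤ (sip.sip y w).re := by
      have := h w
      rwa [hAw] at this
    have h2 : sip.sip w w = sip.sip x w + (-(t : ℂ)) * sip.sip y w := by
      have : w = x + (-(t : ℂ)) • y := by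
        rw [hw]; module
      rw [this, sip.add_left, sip.smul_left]
    have hnormsq : (‖w‖ : ℝ) ^ 2 = (sip.sip w w).re := by
      have := sip.norm_sq w
      rw [this, ← Complex.ofReal_pow, Complex.ofReal_re]
    have h3 : (‖w‖ : ℝ) ^ 2 = (sip.sip x w).re - t * (sip.sip y w).re := by
      rw [hnormsq, h2]
      simp [Complex.add_re, Complex.mul_re]
      ring
    have h4 : (sip.sip x w).re ≤ ‖x‖ * ‖w‖ := by
      calc (sip.sip x w).re ≤ ‖sip.sip x w‖ := Complex.re_le_norm _
        _ ≤ ‖x‖ * ‖w‖ := sip.abs_le x w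
    have h5 : (‖w‖ : ℝ) ^ 2 ≤ ‖x‖ * ‖w‖ := by nlinarith
    have hw_le : ‖w‖ ≤ ‖x‖ := by
      rcases (norm_nonneg w).eq_or_lt' with h0 | h0
      · rw [h0]; exact norm_nonneg x
      · nlinarith
    have hty : ‖(t : ℂ) • y‖ = t * ‖y‖ := by
      rw [norm_smul]
      simp [abs_of_pos ht]
    calc t * ‖y‖ = ‖(t : ℂ) • y‖ := hty.symm
      _ = ‖x - w‖ := by rw [hw]; congr 1; abel
      _ ≤ ‖x‖ + ‖w‖ := norm_sub_le _ _
      _ ≤ 2 * ‖x‖ := by linarith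
  by_contra hne
  have hypos : 0 < ‖y‖ := norm_pos_iff.mpr hne
  have := main ((2 * ‖x‖ + 1) / ‖y‖) (by positivity)
  rw [div_mul_cancel₀ _ (ne_of_gt hypos)] at this
  linarith

/-- An accretive linear operator has ascent at most `1`:
`N(A²) = N(A)`, equivalently `R(A) ∩ N(A) = {0}`. -/
theorem ascent_le_one_of_accretive
    (X : Type*) [NormedAddCommGroup X] [NormedSpace ℂ X] [CompleteSpace X]
    (sip : SemiInnerProduct X) (A : X →ₗ[ℂ] X)
    (h : ∀ x : X, 0 ≤ (sip.sip (A x) x).re) :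
    LinearMap.ker (A ∘ₗ A) = LinearMap.ker A ∧
    LinearMap.range A ⊓ LinearMap.ker A = ⊥ := by
  constructor
  · ext x
    simp only [LinearMap.mem_ker, LinearMap.comp_apply]
    constructor
    · intro hx
      exact accretive_key X sip A h x hx
    · intro hx
      rw [hx, map_zero]
  · rw [Submodule.eq_bot_iff]
    rintro y ⟨⟨x, rfl⟩, hker⟩
    exact accretive_key X sip A h x hker
end

section
/- Let A : X → X be a bounded linear operator on a complex Banach space with closed range such that R(A) + N(A) is closed. If φ(A) < π, then X = R(A) ⊕ N(A) (direct sum decomposition). -/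
private lemma unit_surjective {Y : Type*} [NormedAddCommGroup Y] [NormedSpace ℂ Y]
    (w : (Y →L[ℂ] Y)ˣ) : Function.Surjective (w.val : Y →L[ℂ] Y) := by
  intro y
  refine ⟨(↑w⁻¹ : Y →L[ℂ] Y) y, ?_⟩
  have h : ((w.val * ↑w⁻¹) : Y →L[ℂ] Y) y = y := by rw [Units.mul_inv]; rfl
  rwa [ContinuousLinearMap.mul_apply] at h

private lemma surj_step {Y : Type*} [NormedAddCommGroup Y] [NormedSpace ℂ Y] [CompleteSpace Y]
    {c : ℝ} (hc : 0 < c) {T T' : Y →L[ℂ] Y} (hdist : ‖T' - T‖ < c)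
    (hbound : ∀ u, c * ‖u‖ ≤ ‖T u‖) (hsurj : Function.Surjective T) :
    Function.Surjective T' := by
  have hker : LinearMap.ker (T : Y →ₗ[ℂ] Y) = ⊥ := by
    rw [LinearMap.ker_eq_bot']
    intro u hu
    have h := hbound u
    rw [show T u = 0 from hu, norm_zero] at h
    have : ‖u‖ ≤ 0 := by nlinarith [norm_nonneg u]
    exact norm_le_zero_iff.1 this
  have hrange : LinearMap.range (T : Y →ₗ[ℂ] Y) = ⊤ := LinearMap.range_eq_top.2 hsurj
  set E := ContinuousLinearEquiv.ofBijective T hker hrange with hE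
  have hEfun : ⇑E = ⇑T := ContinuousLinearEquiv.coeFn_ofBijective T hker hrange
  have hEsymm : ‖(E.symm : Y →L[ℂ] Y)‖ ≤ c⁻¹ := by
    refine ContinuousLinearMap.opNorm_le_bound _ (by positivity) fun y => ?_
    have h1 : T (E.symm y) = y := by
      have := E.apply_symm_apply y
      rwa [hEfun] at this
    have h2 := hbound (E.symm y)
    rw [h1] at h2
    have : ‖(E.symm : Y →L[ℂ] Y) y‖ = ‖E.symm y‖ := rfl
    rw [this]
    calc ‖E.symm y‖ = c⁻¹ * (c * ‖E.symm y‖) := by field_simp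
      _ ≤ c⁻¹ * ‖y‖ := mul_le_mul_of_nonneg_left h2 (by positivity)
  set D := T' - T with hD
  have hDE : ‖D.comp (E.symm : Y →L[ℂ] Y)‖ < 1 := by
    calc ‖D.comp (E.symm : Y →L[ℂ] Y)‖ ≤ ‖D‖ * ‖(E.symm : Y →L[ℂ] Y)‖ :=
          ContinuousLinearMap.opNorm_comp_le _ _
      _ ≤ ‖D‖ * c⁻¹ := mul_le_mul_of_nonneg_left hEsymm (norm_nonneg D)
      _ < c * c⁻¹ := by
          exact mul_lt_mul_of_pos_right hdist (by positivity)
      _ = 1 := mul_inv_cancel₀ hc.ne'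
  set U := Units.oneSub (-(D.comp (E.symm : Y →L[ℂ] Y))) (by rwa [norm_neg]) with hU
  have hval : (U.val) = 1 + D.comp (E.symm : Y →L[ℂ] Y) := by
    show 1 - _ = _
    rw [sub_neg_eq_add]
  have hfact : ∀ u, T' u = U.val (T u) := by
    intro u
    have h2 : E.symm (T u) = u := by
      have h3 : T u = E u := by rw [hEfun]
      rw [h3, E.symm_apply_apply]
    rw [hval]
    simp only [ContinuousLinearMap.add_apply, ContinuousLinearMap.one_apply,
      ContinuousLinearMap.comp_apply]
    have : (E.symm : Y →L[ℂ] Y) (T u) = u := by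
      show E.symm (T u) = u
      exact h2
    rw [this, hD]
    simp
  intro y
  obtain ⟨z, hz⟩ := unit_surjective U y
  obtain ⟨u, hu⟩ := hsurj z
  exact ⟨u, by rw [hfact, hu, hz]⟩

set_option maxHeartbeats 1600000
set_option synthInstance.maxHeartbeats 400000

/-- Main theorem: if `A` has closed range, `R(A) + N(A)` is closed and `φ(A) < π`,
then `X = R(A) ⊕ N(A)`. -/
theorem range_ker_complementary_of_angle_lt_pi
    (X : Type*) [NormedAddCommGroup X] [NormedSpace ℂ X] [CompleteSpace X]
    (sip : SemiInnerProduct X) (A : X →L[ℂ] X)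
    (hR : IsClosed ((LinearMap.range (A : X →ₗ[ℂ] X) : Submodule ℂ X) : Set X))
    (hRN : IsClosed ((LinearMap.range (A : X →ₗ[ℂ] X) ⊔ LinearMap.ker (A : X →ₗ[ℂ] X) : Submodule ℂ X) : Set X))
    (hangle : -1 < sInf {r : ℝ | ∃ x : X, x ∉ LinearMap.ker (A : X →ₗ[ℂ] X) ∧
      r = (sip.sip (A x) x).re / (‖A x‖ * ‖x‖)}) :
    LinearMap.range (A : X →ₗ[ℂ] X) ⊔ LinearMap.ker (A : X →ₗ[ℂ] X) = ⊤ ∧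
    LinearMap.range (A : X →ₗ[ℂ] X) ⊓ LinearMap.ker (A : X →ₗ[ℂ] X) = ⊥ := by
  set S : Set ℝ := {r : ℝ | ∃ x : X, x ∉ LinearMap.ker (A : X →ₗ[ℂ] X) ∧
      r = (sip.sip (A x) x).re / (‖A x‖ * ‖x‖)} with hSdef
  -- the set is bounded below by -1
  have hbdd : BddBelow S := by
    refine ⟨-1, fun r hr => ?_⟩
    obtain ⟨x, hx, rfl⟩ := hr
    have hA : A x ≠ 0 := by simpa [LinearMap.mem_ker] using hx
    have hxne : x ≠ 0 := fun h => hA (by simp [h])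
    have hpos : 0 < ‖A x‖ * ‖x‖ := mul_pos (norm_pos_iff.2 hA) (norm_pos_iff.2 hxne)
    rw [le_div_iff₀ hpos]
    have h1 := sip.abs_le (A x) x
    have h2 := abs_le.1 (Complex.abs_re_le_norm (sip.sip (A x) x))
    linarith [h2.1]
  -- Part 1 : the intersection is trivial
  have hinf : LinearMap.range (A : X →ₗ[ℂ] X) ⊓ LinearMap.ker (A : X →ₗ[ℂ] X) = ⊥ := by
    rw [eq_bot_iff]
    intro y hy
    rw [Submodule.mem_inf] at hy
    obtain ⟨hyR, hyN⟩ := hy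
    rw [Submodule.mem_bot]
    by_contra hy0
    obtain ⟨x, hx⟩ := hyR
    have hAy : A y = 0 := hyN
    have hypos : 0 < ‖y‖ := norm_pos_iff.2 hy0
    set s := sInf S with hs
    have hδ : 0 < s + 1 := by linarith
    set t : ℝ := 2 * ‖x‖ / ((s + 1) * ‖y‖) + 1 with ht
    have htpos : 0 < t := by positivity
    set z : X := x - (t : ℂ) • y with hz
    have hAz : A z = y := by
      simp [hz, map_sub, show A x = y from hx, hAy]
    have hzker : z ∉ LinearMap.ker (A : X →ₗ[ℂ] X) := by
      simp [LinearMap.mem_ker, hAz, hy0]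
    have hzpos : 0 < ‖z‖ :=
      norm_pos_iff.2 (fun h => hy0 (by rw [← hAz, h, map_zero]))
    have hsipz : sip.sip z z = sip.sip x z - (t : ℂ) * sip.sip y z := by
      rw [hz, sub_eq_add_neg, sip.add_left, ← neg_smul, sip.smul_left]
      ring
    have hre : ‖z‖ ^ 2 = (sip.sip x z).re - t * (sip.sip y z).re := by
      have h := congrArg Complex.re ((sip.norm_sq z).symm.trans hsipz)
      simpa [Complex.sub_re, Complex.re_ofReal_mul, ← Complex.ofReal_pow] using h
    have h1 : (sip.sip x z).re ≤ ‖x‖ * ‖z‖ :=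
      le_trans (Complex.re_le_norm _) (sip.abs_le x z)
    have h2 : t * (sip.sip y z).re ≤ ‖x‖ * ‖z‖ - ‖z‖ ^ 2 := by linarith
    have htri : t * ‖y‖ - ‖x‖ ≤ ‖z‖ := by
      have h3 : ‖(t : ℂ) • y‖ - ‖x‖ ≤ ‖(t : ℂ) • y - x‖ := norm_sub_norm_le _ _
      have h4 : ‖(t : ℂ) • y‖ = t * ‖y‖ := by
        rw [norm_smul, Complex.norm_real, Real.norm_eq_abs, abs_of_pos htpos]
      rw [h4, norm_sub_rev] at h3
      exact h3
    have hmem : (sip.sip (A z) z).re / (‖A z‖ * ‖z‖) ∈ S := ⟨z, hzker, rfl⟩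
    have hle := csInf_le hbdd hmem
    rw [← hs] at hle
    rw [hAz] at hle
    have hpos2 : 0 < ‖y‖ * ‖z‖ := mul_pos hypos hzpos
    rw [le_div_iff₀ hpos2] at hle
    -- hle : s * (‖y‖ * ‖z‖) ≤ (sip.sip y z).re
    have hyne : (s + 1) * ‖y‖ ≠ 0 := by positivity
    have hts : t * ((s + 1) * ‖y‖) = 2 * ‖x‖ + (s + 1) * ‖y‖ := by
      rw [ht]; field_simp
    have hts2 : t * ((s + 1) * ‖y‖) * ‖z‖ = (2 * ‖x‖ + (s + 1) * ‖y‖) * ‖z‖ := by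
      rw [hts]
    have e1 : t * (s * (‖y‖ * ‖z‖)) ≤ t * (sip.sip y z).re :=
      mul_le_mul_of_nonneg_left hle htpos.le
    have e2 : (t * ‖y‖ - ‖x‖) * ‖z‖ ≤ ‖z‖ ^ 2 := by
      nlinarith [mul_le_mul_of_nonneg_right htri hzpos.le]
    have epos : 0 < (s + 1) * ‖y‖ * ‖z‖ := by positivity
    nlinarith [e1, e2, h2, hts2, epos]
  refine ⟨?_, hinf⟩
  -- coercivity constant
  set δ₀ : ℝ := min (sInf S + 1) 1 with hδ₀def
  have hδ₀pos : 0 < δ₀ := lt_min (by linarith) one_pos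
  have hcore : ∀ x : X, (δ₀ - 1) * (‖A x‖ * ‖x‖) ≤ (sip.sip (A x) x).re := by
    intro x
    by_cases hx : A x = 0
    · have hz0 : sip.sip 0 x = 0 := by
        have h := sip.smul_left 0 x x
        simpa using h
      simp [hx, hz0]
    · have hxN : x ∉ LinearMap.ker (A : X →ₗ[ℂ] X) := by simpa [LinearMap.mem_ker] using hx
      have hxne : x ≠ 0 := fun h => hx (by simp [h])
      have hpos : 0 < ‖A x‖ * ‖x‖ := mul_pos (norm_pos_iff.2 hx) (norm_pos_iff.2 hxne)
      have hle := csInf_le hbdd (show _ ∈ S from ⟨x, hxN, rfl⟩)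
      rw [le_div_iff₀ hpos] at hle
      have h1 : δ₀ - 1 ≤ sInf S := by
        have h2 := min_le_left (sInf S + 1) 1
        rw [← hδ₀def] at h2
        linarith
      calc (δ₀ - 1) * (‖A x‖ * ‖x‖) ≤ sInf S * (‖A x‖ * ‖x‖) :=
            mul_le_mul_of_nonneg_right h1 hpos.le
        _ ≤ _ := hle
  haveI hcompR : CompleteSpace ↥(LinearMap.range (A : X →ₗ[ℂ] X)) := hR.completeSpace_coe
  haveI hcompM : CompleteSpace ↥(LinearMap.range (A : X →ₗ[ℂ] X) ⊔ LinearMap.ker (A : X →ₗ[ℂ] X)) := hRN.completeSpace_coe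
  haveI hcompN : CompleteSpace ↥(LinearMap.ker (A : X →ₗ[ℂ] X)) :=
    (ContinuousLinearMap.isClosed_ker A).completeSpace_coe
  -- open mapping bound for A onto its range
  let Ahat : X →L[ℂ] ↥(LinearMap.range (A : X →ₗ[ℂ] X)) :=
    A.codRestrict (LinearMap.range (A : X →ₗ[ℂ] X)) (fun x => ⟨x, rfl⟩)
  have hAhat_surj : Function.Surjective Ahat := by
    rintro ⟨y, x, rfl⟩
    exact ⟨x, rfl⟩
  obtain ⟨C, hCpos, hC⟩ := Ahat.exists_preimage_norm_le hAhat_surj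
  -- the isomorphism range × ker ≃ range ⊔ ker
  let f1 : (↥(LinearMap.range (A : X →ₗ[ℂ] X)) × ↥(LinearMap.ker (A : X →ₗ[ℂ] X))) →L[ℂ] X :=
    ((LinearMap.range (A : X →ₗ[ℂ] X)).subtypeL.comp (ContinuousLinearMap.fst ℂ _ _)) +
    ((LinearMap.ker (A : X →ₗ[ℂ] X)).subtypeL.comp (ContinuousLinearMap.snd ℂ _ _))
  let Φ : (↥(LinearMap.range (A : X →ₗ[ℂ] X)) × ↥(LinearMap.ker (A : X →ₗ[ℂ] X))) →L[ℂ]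
      ↥(LinearMap.range (A : X →ₗ[ℂ] X) ⊔ LinearMap.ker (A : X →ₗ[ℂ] X)) :=
    f1.codRestrict _ (fun p => Submodule.add_mem _
      (Submodule.mem_sup_left p.1.2) (Submodule.mem_sup_right p.2.2))
  have hΦcoe : ∀ p, ((Φ p : ↥(LinearMap.range (A : X →ₗ[ℂ] X) ⊔ LinearMap.ker (A : X →ₗ[ℂ] X))) : X)
      = (p.1 : X) + (p.2 : X) := fun p => rfl
  have hΦker : Φ.ker = ⊥ := by
    rw [LinearMap.ker_eq_bot']
    intro p hp
    have h0 : (p.1 : X) + (p.2 : X) = 0 := by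
      have h := congrArg Subtype.val (show Φ p = 0 from hp)
      rw [hΦcoe] at h
      simpa using h
    have h1 : (p.1 : X) ∈ LinearMap.range (A : X →ₗ[ℂ] X) ⊓ LinearMap.ker (A : X →ₗ[ℂ] X) := by
      refine Submodule.mem_inf.2 ⟨p.1.2, ?_⟩
      have he : (p.1 : X) = -(p.2 : X) := eq_neg_of_add_eq_zero_left h0
      rw [he]
      exact (LinearMap.ker (A : X →ₗ[ℂ] X)).neg_mem p.2.2
    rw [hinf, Submodule.mem_bot] at h1
    have h2 : (p.2 : X) = 0 := by rw [h1] at h0; simpa using h0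
    exact Prod.ext (Subtype.ext h1) (Subtype.ext h2)
  have hΦrange : Φ.range = ⊤ := by
    rw [LinearMap.range_eq_top]
    rintro ⟨y, hy⟩
    obtain ⟨r, hr, n, hn, rfl⟩ := Submodule.mem_sup.1 hy
    exact ⟨(⟨r, hr⟩, ⟨n, hn⟩), rfl⟩
  let Ψ := ContinuousLinearEquiv.ofBijective Φ hΦker hΦrange
  set K : ℝ := max ‖(Ψ.symm : ↥(LinearMap.range (A : X →ₗ[ℂ] X) ⊔ LinearMap.ker (A : X →ₗ[ℂ] X)) →L[ℂ]
      (↥(LinearMap.range (A : X →ₗ[ℂ] X)) × ↥(LinearMap.ker (A : X →ₗ[ℂ] X))))‖ 1 with hKdef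
  have hK1 : (1:ℝ) ≤ K := le_max_right _ _
  have hKpos : (0:ℝ) < K := lt_of_lt_of_le one_pos hK1
  -- lower bound for A on its range
  have hm : ∀ u : ↥(LinearMap.range (A : X →ₗ[ℂ] X)), ‖u‖ ≤ K * C * ‖A (u : X)‖ := by
    intro u
    obtain ⟨x, hxA, hxnorm⟩ := hC ⟨A (u : X), ⟨(u : X), rfl⟩⟩
    have hxAu : A x = A (u : X) := congrArg Subtype.val hxA
    have hxnorm' : ‖x‖ ≤ C * ‖A (u : X)‖ := hxnorm
    have hnN : x - (u : X) ∈ LinearMap.ker (A : X →ₗ[ℂ] X) := by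
      simp [LinearMap.mem_ker, map_sub, hxAu]
    set p : ↥(LinearMap.range (A : X →ₗ[ℂ] X)) × ↥(LinearMap.ker (A : X →ₗ[ℂ] X)) := (u, ⟨x - (u : X), hnN⟩) with hp
    have h2 : Ψ.symm (Φ p) = p :=
      ContinuousLinearEquiv.ofBijective_symm_apply_apply Φ hΦker hΦrange p
    have h1 : ‖u‖ ≤ ‖p‖ := norm_fst_le p
    have h3 : ‖Φ p‖ = ‖x‖ := by
      have h4 : ((Φ p : ↥(LinearMap.range (A : X →ₗ[ℂ] X) ⊔ LinearMap.ker (A : X →ₗ[ℂ] X))) : X) = x := by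
        rw [hΦcoe]; simp [hp]
      rw [show ‖Φ p‖ = ‖((Φ p : ↥(LinearMap.range (A : X →ₗ[ℂ] X) ⊔ LinearMap.ker (A : X →ₗ[ℂ] X))) : X)‖ from rfl, h4]
    calc ‖u‖ ≤ ‖p‖ := h1
      _ = ‖Ψ.symm (Φ p)‖ := by rw [h2]
      _ ≤ ‖(Ψ.symm : ↥(LinearMap.range (A : X →ₗ[ℂ] X) ⊔ LinearMap.ker (A : X →ₗ[ℂ] X)) →L[ℂ]
            (↥(LinearMap.range (A : X →ₗ[ℂ] X)) × ↥(LinearMap.ker (A : X →ₗ[ℂ] X))))‖ * ‖Φ p‖ :=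
          (Ψ.symm : ↥(LinearMap.range (A : X →ₗ[ℂ] X) ⊔ LinearMap.ker (A : X →ₗ[ℂ] X)) →L[ℂ]
            (↥(LinearMap.range (A : X →ₗ[ℂ] X)) × ↥(LinearMap.ker (A : X →ₗ[ℂ] X)))).le_opNorm _
      _ ≤ K * ‖Φ p‖ := mul_le_mul_of_nonneg_right (le_max_left _ _) (norm_nonneg _)
      _ = K * ‖x‖ := by rw [h3]
      _ ≤ K * (C * ‖A (u : X)‖) := mul_le_mul_of_nonneg_left hxnorm' hKpos.le
      _ = K * C * ‖A (u : X)‖ := by ring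
  -- the operator A restricted to its range
  let B : ↥(LinearMap.range (A : X →ₗ[ℂ] X)) →L[ℂ] ↥(LinearMap.range (A : X →ₗ[ℂ] X)) :=
    (A.comp (LinearMap.range (A : X →ₗ[ℂ] X)).subtypeL).codRestrict _ (fun u => ⟨(u : X), rfl⟩)
  have hBcoe : ∀ u : ↥(LinearMap.range (A : X →ₗ[ℂ] X)), ((B u : ↥(LinearMap.range (A : X →ₗ[ℂ] X))) : X) = A (u : X) :=
    fun u => rfl
  set c : ℝ := δ₀ / (2 * (K * C)) with hcdef
  have hKC : (0:ℝ) < K * C := mul_pos hKpos hCpos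
  have hcpos : 0 < c := by positivity
  -- uniform coercivity of B + t
  have hcoer : ∀ t : ℝ, 0 ≤ t → ∀ u : ↥(LinearMap.range (A : X →ₗ[ℂ] X)),
      c * ‖u‖ ≤ ‖(B + ((t : ℝ) : ℂ) •
        (1 : ↥(LinearMap.range (A : X →ₗ[ℂ] X)) →L[ℂ] ↥(LinearMap.range (A : X →ₗ[ℂ] X)))) u‖ := by
    intro t ht u
    set x : X := (u : X) with hxdef
    have hval : (((B + ((t : ℝ) : ℂ) • 1) u : ↥(LinearMap.range (A : X →ₗ[ℂ] X))) : X)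
        = A x + ((t : ℝ) : ℂ) • x := by
      simp [ContinuousLinearMap.add_apply, ContinuousLinearMap.smul_apply,
        ContinuousLinearMap.one_apply]
      rfl
    have hw : ‖(B + ((t : ℝ) : ℂ) • 1) u‖ = ‖A x + ((t : ℝ) : ℂ) • x‖ := by
      rw [show ‖(B + ((t : ℝ) : ℂ) • 1) u‖
        = ‖(((B + ((t : ℝ) : ℂ) • 1) u : ↥(LinearMap.range (A : X →ₗ[ℂ] X))) : X)‖ from rfl, hval]
    rcases eq_or_ne x 0 with hx0 | hx0
    · have hu0 : u = 0 := Subtype.ext hx0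
      simp [hu0]
    · have hspos : 0 < ‖x‖ := norm_pos_iff.2 hx0
      set w : X := A x + ((t : ℝ) : ℂ) • x with hwdef
      have hsipw : (sip.sip w x).re = (sip.sip (A x) x).re + t * ‖x‖ ^ 2 := by
        rw [hwdef, sip.add_left, sip.smul_left, sip.norm_sq]
        simp [Complex.add_re, Complex.re_ofReal_mul, ← Complex.ofReal_pow]
      have h1 : (sip.sip w x).re ≤ ‖w‖ * ‖x‖ :=
        le_trans (Complex.re_le_norm _) (sip.abs_le _ _)
      have h3 : w - ((t : ℝ) : ℂ) • x = A x := by rw [hwdef]; abel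
      have h4 : ‖((t : ℝ) : ℂ) • x‖ = t * ‖x‖ := by
        rw [norm_smul, Complex.norm_real, Real.norm_eq_abs, abs_of_nonneg ht]
      have h2 : ‖A x‖ - t * ‖x‖ ≤ ‖w‖ := by
        have h5 : ‖A x‖ ≤ ‖w‖ + ‖((t : ℝ) : ℂ) • x‖ := by
          rw [← h3]; exact norm_sub_le _ _
        rw [h4] at h5; linarith
      have hcx := hcore x
      have hmx' : ‖x‖ ≤ K * C * ‖A x‖ := hm u
      rw [hw]
      show c * ‖x‖ ≤ ‖w‖
      rw [hcdef, div_mul_eq_mul_div, div_le_iff₀ (by positivity)]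
      have hsum : δ₀ * (‖A x‖ * ‖x‖) ≤ 2 * (‖w‖ * ‖x‖) := by
        nlinarith [h1, hsipw, hcx, mul_le_mul_of_nonneg_right h2 hspos.le]
      have hfin : δ₀ * (‖x‖ * ‖x‖) ≤ (K * C) * (2 * (‖w‖ * ‖x‖)) := by
        calc δ₀ * (‖x‖ * ‖x‖) ≤ δ₀ * ((K * C * ‖A x‖) * ‖x‖) := by
              nlinarith [mul_le_mul_of_nonneg_right
                (mul_le_mul_of_nonneg_left hmx' hδ₀pos.le) hspos.le]
          _ = (K * C) * (δ₀ * (‖A x‖ * ‖x‖)) := by ring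
          _ ≤ (K * C) * (2 * (‖w‖ * ‖x‖)) := mul_le_mul_of_nonneg_left hsum hKC.le
      nlinarith [hfin, hspos]
  -- base case : B + t₀ is surjective
  set t₀ : ℝ := ‖B‖ + 1 with ht₀def
  have ht₀pos : 0 < t₀ := by positivity
  have ht₀C : ((t₀ : ℝ) : ℂ) ≠ 0 := Complex.ofReal_ne_zero.2 ht₀pos.ne'
  have hbase : Function.Surjective
      (B + ((t₀ : ℝ) : ℂ) • (1 : ↥(LinearMap.range (A : X →ₗ[ℂ] X)) →L[ℂ] ↥(LinearMap.range (A : X →ₗ[ℂ] X)))) := by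
    have hxnorm : ‖(-((t₀ : ℝ) : ℂ)⁻¹) • B‖ < 1 := by
      refine lt_of_le_of_lt (ContinuousLinearMap.opNorm_smul_le _ _) ?_
      have hn1 : ‖(-((t₀ : ℝ) : ℂ)⁻¹)‖ = t₀⁻¹ := by
        rw [norm_neg, norm_inv, Complex.norm_real, Real.norm_eq_abs, abs_of_pos ht₀pos]
      rw [hn1, ← div_eq_inv_mul, div_lt_one ht₀pos, ht₀def]
      linarith
    set U := Units.oneSub (-((t₀ : ℝ) : ℂ)⁻¹ • B) (by exact hxnorm) with hUdef
    have hUval : U.val = 1 + ((t₀ : ℝ) : ℂ)⁻¹ • B := by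
      ext v
      rw [hUdef, Units.val_oneSub]
      simp only [ContinuousLinearMap.sub_apply, ContinuousLinearMap.add_apply,
        ContinuousLinearMap.smul_apply, ContinuousLinearMap.one_apply, neg_smul]
      abel
    intro y
    set v := (↑U⁻¹ : ↥(LinearMap.range (A : X →ₗ[ℂ] X)) →L[ℂ] ↥(LinearMap.range (A : X →ₗ[ℂ] X))) y with hv
    refine ⟨((t₀ : ℝ) : ℂ)⁻¹ • v, ?_⟩
    have hUy : U.val v = y := by
      rw [hv, ← ContinuousLinearMap.mul_apply, Units.mul_inv]; rfl
    have hcomp : (B + ((t₀ : ℝ) : ℂ) • 1) (((t₀ : ℝ) : ℂ)⁻¹ • v) = U.val v := by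
      rw [hUval]
      simp only [ContinuousLinearMap.add_apply, ContinuousLinearMap.smul_apply,
        ContinuousLinearMap.one_apply, map_smul, smul_smul, mul_inv_cancel₀ ht₀C, one_smul]
      rw [smul_add, smul_smul, inv_mul_cancel₀ ht₀C, one_smul]
      abel
    rw [hcomp, hUy]
  -- stepping down
  have hstep : ∀ a b : ℝ, 0 ≤ a → |b - a| < c →
      Function.Surjective (B + ((a : ℝ) : ℂ) •
        (1 : ↥(LinearMap.range (A : X →ₗ[ℂ] X)) →L[ℂ] ↥(LinearMap.range (A : X →ₗ[ℂ] X)))) →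
      Function.Surjective (B + ((b : ℝ) : ℂ) •
        (1 : ↥(LinearMap.range (A : X →ₗ[ℂ] X)) →L[ℂ] ↥(LinearMap.range (A : X →ₗ[ℂ] X)))) := by
    intro a b ha hab hs
    refine surj_step hcpos ?_ (hcoer a ha) hs
    have hdiff : (B + ((b : ℝ) : ℂ) • 1) - (B + ((a : ℝ) : ℂ) • 1)
        = (((b - a : ℝ)) : ℂ) • (1 : ↥(LinearMap.range (A : X →ₗ[ℂ] X)) →L[ℂ] ↥(LinearMap.range (A : X →ₗ[ℂ] X))) := by
      ext u
      simp only [ContinuousLinearMap.sub_apply, ContinuousLinearMap.add_apply,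
        ContinuousLinearMap.smul_apply, ContinuousLinearMap.one_apply, Complex.ofReal_sub,
        sub_smul]
      abel
    rw [hdiff]
    have hDle : ‖(((b - a : ℝ)) : ℂ) • (1 : ↥(LinearMap.range (A : X →ₗ[ℂ] X)) →L[ℂ] ↥(LinearMap.range (A : X →ₗ[ℂ] X)))‖
        ≤ |b - a| := by
      refine ContinuousLinearMap.opNorm_le_bound _ (abs_nonneg _) (fun v => ?_)
      rw [ContinuousLinearMap.smul_apply, ContinuousLinearMap.one_apply, norm_smul,
        Complex.norm_real, Real.norm_eq_abs]
    exact lt_of_le_of_lt hDle hab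
  have hdesc : ∀ n : ℕ, Function.Surjective
      (B + ((max 0 (t₀ - n * (c / 2)) : ℝ) : ℂ) •
        (1 : ↥(LinearMap.range (A : X →ₗ[ℂ] X)) →L[ℂ] ↥(LinearMap.range (A : X →ₗ[ℂ] X)))) := by
    intro n
    induction n with
    | zero =>
      have h0 : max 0 (t₀ - (0 : ℕ) * (c / 2)) = t₀ := by
        simp [max_eq_right ht₀pos.le]
      rw [h0]
      exact hbase
    | succ n ih =>
      refine hstep _ _ (le_max_left _ _) ?_ ih
      have habs : |max 0 (t₀ - ((n : ℝ) + 1) * (c / 2)) - max 0 (t₀ - (n : ℝ) * (c / 2))|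
          ≤ |(t₀ - ((n : ℝ) + 1) * (c / 2)) - (t₀ - (n : ℝ) * (c / 2))| := by
        rw [max_comm 0 (t₀ - ((n : ℝ) + 1) * (c / 2)), max_comm 0 (t₀ - (n : ℝ) * (c / 2))]
        exact abs_max_sub_max_le_abs _ _ _
      have heq : |(t₀ - ((n : ℝ) + 1) * (c / 2)) - (t₀ - (n : ℝ) * (c / 2))| = c / 2 := by
        rw [show (t₀ - ((n : ℝ) + 1) * (c / 2)) - (t₀ - (n : ℝ) * (c / 2)) = -(c / 2) by ring,
          abs_neg, abs_of_pos (by positivity)]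
      push_cast
      linarith [habs, heq.le, hcpos]
  obtain ⟨n, hn⟩ := exists_nat_ge (t₀ / (c / 2))
  have hzero : max 0 (t₀ - n * (c / 2)) = 0 := by
    rw [max_eq_left]
    rw [div_le_iff₀ (by positivity)] at hn
    linarith
  have hBsurj : Function.Surjective B := by
    have h := hdesc n
    rw [hzero] at h
    have he : B + (((0 : ℝ)) : ℂ) •
        (1 : ↥(LinearMap.range (A : X →ₗ[ℂ] X)) →L[ℂ] ↥(LinearMap.range (A : X →ₗ[ℂ] X))) = B := by
      ext v
      simp [ContinuousLinearMap.add_apply, ContinuousLinearMap.smul_apply,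
        ContinuousLinearMap.one_apply]
    rwa [he] at h
  -- conclude
  rw [eq_top_iff]
  intro x _
  obtain ⟨u, hu⟩ := hBsurj ⟨A x, ⟨x, rfl⟩⟩
  have hAu : A (u : X) = A x := congrArg Subtype.val hu
  refine Submodule.mem_sup.2 ⟨(u : X), u.2, x - (u : X), ?_, by abel⟩
  simp [LinearMap.mem_ker, map_sub, hAu]
end

section
/- Let X be a complex Hilbert space and A : X → X a bounded linear operator with closed range. If inf{Re⟨Ax, x⟩/(‖Ax‖‖x‖) : x ∉ N(A)} > −1, then R(A²) is closed (equivalently, R(A) + N(A) is closed). -/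
set_option maxHeartbeats 1000000

open scoped InnerProductSpace

lemma aux_sum_closed {X : Type*} [NormedAddCommGroup X] [InnerProductSpace ℂ X] [CompleteSpace X]
    (M N : Submodule ℂ X) (hM : IsClosed (M : Set X)) (hN : IsClosed (N : Set X))
    (k : ℝ) (hk0 : 0 ≤ k) (hk1 : k < 1)
    (hb : ∀ u ∈ M, ∀ v ∈ N, ‖(inner ℂ u v : ℂ)‖ ≤ k * (‖u‖ * ‖v‖)) :
    IsClosed ((M ⊔ N : Submodule ℂ X) : Set X) := by
  haveI : CompleteSpace M := hM.completeSpace_coe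
  haveI : CompleteSpace N := hN.completeSpace_coe
  set Φ : (M × N) →L[ℂ] X :=
    (M.subtypeL.comp (ContinuousLinearMap.fst ℂ M N)) +
      (N.subtypeL.comp (ContinuousLinearMap.snd ℂ M N)) with hΦ
  have hΦ_apply : ∀ p : M × N, Φ p = (p.1 : X) + (p.2 : X) := fun p => rfl
  have h1k : (0:ℝ) < 1 - k := by linarith
  have key : ∀ p : M × N, ‖p‖ ≤ Real.sqrt (1 - k)⁻¹ * ‖Φ p‖ := by
    intro p
    obtain ⟨u, v⟩ := p
    have hip : ‖(inner ℂ (u : X) (v : X) : ℂ)‖ ≤ k * (‖(u : X)‖ * ‖(v : X)‖) :=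
      hb u u.2 v v.2
    have hre : -(k * (‖(u:X)‖ * ‖(v:X)‖)) ≤ RCLike.re (inner ℂ (u:X) (v:X) : ℂ) := by
      have h := (RCLike.abs_re_le_norm (inner ℂ (u:X) (v:X) : ℂ)).trans hip
      linarith [abs_le.mp h]
    have hsq : (1 - k) * (‖(u:X)‖ ^ 2 + ‖(v:X)‖ ^ 2) ≤ ‖(u:X) + (v:X)‖ ^ 2 := by
      have hexp := norm_add_sq (𝕜 := ℂ) (u : X) (v : X)
      nlinarith [sq_nonneg (‖(u:X)‖ - ‖(v:X)‖)]
    have hnp : ‖((u, v) : M × N)‖ = max ‖(u:X)‖ ‖(v:X)‖ := rfl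
    have hmax : (max ‖(u:X)‖ ‖(v:X)‖) ^ 2 ≤ ‖(u:X)‖ ^ 2 + ‖(v:X)‖ ^ 2 := by
      rcases max_cases ‖(u:X)‖ ‖(v:X)‖ with ⟨h, _⟩ | ⟨h, _⟩ <;> rw [h]
      · exact le_add_of_nonneg_right (sq_nonneg _)
      · exact le_add_of_nonneg_left (sq_nonneg _)
    have hcancel : (1-k)⁻¹ * ((1-k) * (‖(u:X)‖ ^ 2 + ‖(v:X)‖ ^ 2))
        = ‖(u:X)‖ ^ 2 + ‖(v:X)‖ ^ 2 := by field_simp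
    have hfin : ‖((u, v) : M × N)‖ ^ 2 ≤ ((1 - k)⁻¹) * ‖Φ (u, v)‖ ^ 2 := by
      rw [hnp, hΦ_apply]
      calc (max ‖(u:X)‖ ‖(v:X)‖) ^ 2 ≤ ‖(u:X)‖ ^ 2 + ‖(v:X)‖ ^ 2 := hmax
        _ = (1-k)⁻¹ * ((1-k) * (‖(u:X)‖ ^ 2 + ‖(v:X)‖ ^ 2)) := hcancel.symm
        _ ≤ (1-k)⁻¹ * ‖(u:X) + (v:X)‖ ^ 2 :=
            mul_le_mul_of_nonneg_left hsq (inv_nonneg.mpr h1k.le)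
    have := Real.sqrt_le_sqrt hfin
    rw [Real.sqrt_sq (norm_nonneg _), Real.sqrt_mul (inv_nonneg.mpr h1k.le),
      Real.sqrt_sq (norm_nonneg _)] at this
    exact this
  have anti : AntilipschitzWith (Real.toNNReal (Real.sqrt (1 - k)⁻¹)) Φ := by
    apply AddMonoidHomClass.antilipschitz_of_bound
    intro x
    rw [Real.coe_toNNReal _ (Real.sqrt_nonneg _)]
    exact key x
  have hclosed : IsClosed (Set.range Φ) := anti.isClosed_range Φ.uniformContinuous
  have hset : ((M ⊔ N : Submodule ℂ X) : Set X) = Set.range Φ := by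
    ext x
    simp only [SetLike.mem_coe, Submodule.mem_sup, Set.mem_range]
    constructor
    · rintro ⟨y, hy, z, hz, rfl⟩
      exact ⟨(⟨y, hy⟩, ⟨z, hz⟩), rfl⟩
    · rintro ⟨⟨u, v⟩, rfl⟩
      exact ⟨u, u.2, v, v.2, (hΦ_apply (u, v)).symm⟩
  rw [hset]
  exact hclosed

/-- In a Hilbert space, if `A` has closed range and `φ(A) < π`, then `R(A²)` is closed
(equivalently, `R(A) + N(A)` is closed). -/
theorem range_sq_closed_of_angle_lt_pi
    (X : Type*) [NormedAddCommGroup X] [InnerProductSpace ℂ X] [CompleteSpace X]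
    (A : X →L[ℂ] X)
    (hR : IsClosed ((LinearMap.range (A : X →ₗ[ℂ] X) : Submodule ℂ X) : Set X))
    (hangle : -1 < sInf {r : ℝ | ∃ x : X, x ∉ LinearMap.ker (A : X →ₗ[ℂ] X) ∧
      r = (inner ℂ (A x) x : ℂ).re / (‖A x‖ * ‖x‖)}) :
    IsClosed ((LinearMap.range ((A ∘L A : X →L[ℂ] X) : X →ₗ[ℂ] X) : Submodule ℂ X) : Set X) ∧
    IsClosed ((LinearMap.range (A : X →ₗ[ℂ] X) ⊔ LinearMap.ker (A : X →ₗ[ℂ] X) : Submodule ℂ X) : Set X) := by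
  classical
  set S := {r : ℝ | ∃ x : X, x ∉ LinearMap.ker (A : X →ₗ[ℂ] X) ∧
      r = (inner ℂ (A x) x : ℂ).re / (‖A x‖ * ‖x‖)} with hS
  set c := sInf S with hc
  have hbdd : BddBelow S := by
    refine ⟨-1, fun r hr => ?_⟩
    obtain ⟨x, hx, rfl⟩ := hr
    have hAx : A x ≠ 0 := fun h => hx (LinearMap.mem_ker.mpr h)
    have hx0 : x ≠ 0 := by rintro rfl; exact hAx (map_zero A)
    have hpos : 0 < ‖A x‖ * ‖x‖ :=
      mul_pos (norm_pos_iff.mpr hAx) (norm_pos_iff.mpr hx0)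
    rw [le_div_iff₀ hpos]
    have h1 := (RCLike.abs_re_le_norm (inner ℂ (A x) x : ℂ)).trans (norm_inner_le_norm _ _)
    have hre_eq : RCLike.re ((inner ℂ (A x) x : ℂ)) = (inner ℂ (A x) x : ℂ).re := rfl
    rw [hre_eq] at h1
    linarith [abs_le.mp h1]
  have hstep : ∀ x : X, x ∉ LinearMap.ker (A : X →ₗ[ℂ] X) →
      c * (‖A x‖ * ‖x‖) ≤ (inner ℂ (A x) x : ℂ).re := by
    intro x hx
    have hmem : (inner ℂ (A x) x : ℂ).re / (‖A x‖ * ‖x‖) ∈ S := ⟨x, hx, rfl⟩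
    have hAx : A x ≠ 0 := fun h => hx (LinearMap.mem_ker.mpr h)
    have hx0 : x ≠ 0 := by rintro rfl; exact hAx (map_zero A)
    have hpos : 0 < ‖A x‖ * ‖x‖ :=
      mul_pos (norm_pos_iff.mpr hAx) (norm_pos_iff.mpr hx0)
    have h2 := csInf_le hbdd hmem
    rw [le_div_iff₀ hpos] at h2
    exact h2
  -- real inequality against kernel vectors
  have hre : ∀ x : X, A x ≠ 0 → ∀ v, v ∈ LinearMap.ker (A : X →ₗ[ℂ] X) →
      c * (‖A x‖ * ‖v‖) ≤ (inner ℂ (A x) v : ℂ).re := by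
    intro x hAx v hv
    set R0 : ℝ := (inner ℂ (A x) x : ℂ).re with hR0
    set Rv : ℝ := (inner ℂ (A x) v : ℂ).re with hRv
    set C : ℝ := |R0| + |c| * (‖A x‖ * ‖x‖) + 1 with hC
    have hCpos : 0 < C := by positivity
    refine le_of_forall_pos_le_add fun ε hε => ?_
    set t : ℝ := C / ε with ht
    have htpos : 0 < t := div_pos hCpos hε
    have hAv : A v = 0 := LinearMap.mem_ker.mp hv
    have hAxt : A (x + (t:ℂ) • v) = A x := by
      rw [map_add, map_smul, hAv, smul_zero, add_zero]
    have hnotker : x + (t:ℂ) • v ∉ LinearMap.ker (A : X →ₗ[ℂ] X) := by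
      intro h
      exact hAx (hAxt ▸ LinearMap.mem_ker.mp h)
    have h1 := hstep _ hnotker
    rw [hAxt] at h1
    have hinner : (inner ℂ (A x) (x + (t:ℂ) • v) : ℂ).re = R0 + t * Rv := by
      rw [inner_add_right, inner_smul_right]
      simp [Complex.add_re, Complex.mul_re, hR0, hRv]
    rw [hinner] at h1
    set s : ℝ := ‖x + (t:ℂ) • v‖ with hs
    have hnorm : |s - t * ‖v‖| ≤ ‖x‖ := by
      have h := abs_norm_sub_norm_le (x + (t:ℂ) • v) ((t:ℂ) • v)
      have h2 : ‖((t:ℂ)) • v‖ = t * ‖v‖ := by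
        rw [norm_smul, Complex.norm_real, Real.norm_eq_abs, abs_of_pos htpos]
      rw [add_sub_cancel_right, h2] at h
      exact h
    have habs1 : -( |c| * ‖A x‖ * ‖x‖) ≤ c * ‖A x‖ * (s - t * ‖v‖) := by
      have h3 : |c * ‖A x‖ * (s - t * ‖v‖)| ≤ |c| * ‖A x‖ * ‖x‖ := by
        rw [abs_mul, abs_mul, abs_of_nonneg (norm_nonneg (A x))]
        exact mul_le_mul_of_nonneg_left hnorm (by positivity)
      linarith [abs_le.mp h3]
    have h2 : t * (c * (‖A x‖ * ‖v‖)) ≤ t * Rv + C := by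
      nlinarith [le_abs_self R0]
    have h4 : t * (C / t) = C := by field_simp
    have h5 : c * (‖A x‖ * ‖v‖) ≤ Rv + C / t := by
      rw [← mul_le_mul_iff_right₀ htpos, mul_add, h4]
      exact h2
    have h6 : C / t = ε := by
      rw [ht]
      field_simp
    rw [h6] at h5
    exact h5
  set k : ℝ := max (-c) 0 with hk
  have hk0 : 0 ≤ k := le_max_right _ _
  have hk1 : k < 1 := max_lt (by linarith) one_pos
  have hcos : ∀ u ∈ LinearMap.range (A : X →ₗ[ℂ] X), ∀ v ∈ LinearMap.ker (A : X →ₗ[ℂ] X),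
      ‖(inner ℂ u v : ℂ)‖ ≤ k * (‖u‖ * ‖v‖) := by
    intro u hu v hv
    obtain ⟨x, rfl⟩ := hu
    rw [ContinuousLinearMap.coe_coe]
    by_cases hAx : A x = 0
    · have h0 : ‖(inner ℂ (A x) v : ℂ)‖ = 0 := by rw [hAx, inner_zero_left, norm_zero]
      rw [h0]
      positivity
    by_cases hz : (inner ℂ (A x) v : ℂ) = 0
    · rw [hz, norm_zero]
      positivity
    set z := (inner ℂ (A x) v : ℂ) with hzdef
    have hznorm : (0:ℝ) < ‖z‖ := norm_pos_iff.mpr hz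
    set μ : ℂ := -(starRingEnd ℂ) z / (‖z‖ : ℂ) with hμ
    have hnormμ : ‖μ‖ = 1 := by
      rw [hμ, norm_div, norm_neg, RCLike.norm_conj, Complex.norm_real,
        Real.norm_eq_abs, abs_of_pos hznorm, div_self hznorm.ne']
    have hμv : μ • v ∈ LinearMap.ker (A : X →ₗ[ℂ] X) := Submodule.smul_mem _ _ hv
    have h6 := hre x hAx (μ • v) hμv
    have hμz2 : μ * z = -(‖z‖ : ℂ) := by
      have hne : ((‖z‖ : ℝ) : ℂ) ≠ 0 := by exact_mod_cast hznorm.ne'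
      rw [hμ, div_mul_eq_mul_div, div_eq_iff hne, neg_mul]
      rw [mul_comm ((starRingEnd ℂ) z) z, Complex.mul_conj, Complex.normSq_eq_norm_sq]
      push_cast
      ring
    have hre2 : (inner ℂ (A x) (μ • v) : ℂ).re = -‖z‖ := by
      rw [inner_smul_right]
      rw [show (μ * z : ℂ) = -(‖z‖:ℂ) from hμz2]
      simp
    rw [hre2, norm_smul, hnormμ, one_mul] at h6
    have h7 : ‖z‖ ≤ -c * (‖A x‖ * ‖v‖) := by linarith
    calc ‖z‖ ≤ -c * (‖A x‖ * ‖v‖) := h7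
      _ ≤ k * (‖A x‖ * ‖v‖) :=
        mul_le_mul_of_nonneg_right (le_max_left _ _) (by positivity)
  have hNc : IsClosed ((LinearMap.ker (A : X →ₗ[ℂ] X) : Submodule ℂ X) : Set X) :=
    ContinuousLinearMap.isClosed_ker A
  have part1 : IsClosed ((LinearMap.range (A : X →ₗ[ℂ] X) ⊔ LinearMap.ker (A : X →ₗ[ℂ] X) : Submodule ℂ X) : Set X) :=
    aux_sum_closed _ _ hR hNc k hk0 hk1 hcos
  refine ⟨?_, part1⟩
  -- Part 2: range of A² is closed
  set Nn := LinearMap.ker (A : X →ₗ[ℂ] X) with hNn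
  set Rr := (LinearMap.range (A : X →ₗ[ℂ] X) : Submodule ℂ X) with hRr
  haveI : CompleteSpace Nn := hNc.completeSpace_coe
  haveI : CompleteSpace Rr := hR.completeSpace_coe
  haveI : CompleteSpace (Nnᗮ) := (Submodule.isClosed_orthogonal Nn).completeSpace_coe
  set B : (Nnᗮ) →L[ℂ] Rr :=
    (A.comp (Nnᗮ).subtypeL).codRestrict Rr (fun x => LinearMap.mem_range_self _ _) with hB
  have hinj : LinearMap.ker (B : Nnᗮ →ₗ[ℂ] Rr) = ⊥ := by
    rw [LinearMap.ker_eq_bot']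
    intro q hq
    have h1 : A (q : X) = 0 := congrArg Subtype.val hq
    have h2 : (q : X) ∈ Nn := LinearMap.mem_ker.mpr h1
    have h3 : (q : X) = 0 := by
      have := q.2
      rw [Submodule.mem_orthogonal] at this
      have h4 := this (q : X) h2
      simpa [inner_self_eq_zero] using h4
    exact Subtype.ext h3
  have hsurj : LinearMap.range (B : Nnᗮ →ₗ[ℂ] Rr) = ⊤ := by
    rw [LinearMap.range_eq_top]
    rintro ⟨y, x, rfl⟩
    refine ⟨⟨x - (Nn.orthogonalProjectionOnto x : X), Submodule.sub_starProjection_mem_orthogonal x⟩, ?_⟩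
    apply Subtype.ext
    show A (x - (Nn.orthogonalProjectionOnto x : X)) = A x
    rw [map_sub, (show A (Nn.orthogonalProjectionOnto x : X) = 0 from LinearMap.mem_ker.mp (Nn.orthogonalProjectionOnto x).2), sub_zero]
  set E := ContinuousLinearEquiv.ofBijective B hinj hsurj with hE
  have keybd : ∀ w : X, ∀ hw : w ∈ Nnᗮ,
      ‖w‖ ≤ ‖(E.symm : Rr →L[ℂ] Nnᗮ)‖ * ‖A w‖ := by
    intro w hw
    have h1 : E ⟨w, hw⟩ = ⟨A w, LinearMap.mem_range_self _ _⟩ := Subtype.ext rfl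
    have h2 : (⟨w, hw⟩ : Nnᗮ) = E.symm ⟨A w, LinearMap.mem_range_self _ _⟩ := by
      rw [← h1, ContinuousLinearEquiv.symm_apply_apply]
    calc ‖w‖ = ‖(⟨w, hw⟩ : Nnᗮ)‖ := rfl
      _ = ‖E.symm (⟨A w, LinearMap.mem_range_self _ _⟩ : Rr)‖ := by rw [h2]
      _ ≤ ‖(E.symm : Rr →L[ℂ] Nnᗮ)‖ * ‖(⟨A w, LinearMap.mem_range_self _ _⟩ : Rr)‖ :=
          (E.symm : Rr →L[ℂ] Nnᗮ).le_opNorm _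
      _ = ‖(E.symm : Rr →L[ℂ] Nnᗮ)‖ * ‖A w‖ := rfl
  set M := Rr ⊔ Nn with hM
  set Q := Nnᗮ ⊓ M with hQ
  have hQc : IsClosed (Q : Set X) := by
    rw [hQ, Submodule.coe_inf]
    exact (Submodule.isClosed_orthogonal Nn).inter part1
  haveI : CompleteSpace Q := hQc.completeSpace_coe
  set T : Q →L[ℂ] X := A.comp Q.subtypeL with hT
  have hanti : AntilipschitzWith ‖(E.symm : Rr →L[ℂ] Nnᗮ)‖₊ T := by
    apply AddMonoidHomClass.antilipschitz_of_bound
    intro q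
    have hmem := (Submodule.mem_inf.mp q.2).1
    have := keybd q.1 hmem
    simpa [coe_nnnorm, hT] using this
  have hclosedT : IsClosed (Set.range T) := hanti.isClosed_range T.uniformContinuous
  have hseteq : ((LinearMap.range ((A ∘L A : X →L[ℂ] X) : X →ₗ[ℂ] X) : Submodule ℂ X) : Set X) = Set.range T := by
    ext y
    simp only [SetLike.mem_coe, LinearMap.mem_range, Set.mem_range,
      ContinuousLinearMap.comp_apply]
    constructor
    · rintro ⟨x, rfl⟩
      have hwM : A x ∈ M := Submodule.mem_sup_left (LinearMap.mem_range_self _ x)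
      have h3 : A x - (Nn.orthogonalProjectionOnto (A x) : X) ∈ Nnᗮ :=
        Submodule.sub_starProjection_mem_orthogonal (A x)
      have h4 : A x - (Nn.orthogonalProjectionOnto (A x) : X) ∈ M :=
        M.sub_mem hwM (Submodule.mem_sup_right (Nn.orthogonalProjectionOnto (A x)).2)
      refine ⟨⟨A x - (Nn.orthogonalProjectionOnto (A x) : X), Submodule.mem_inf.mpr ⟨h3, h4⟩⟩, ?_⟩
      show A (A x - (Nn.orthogonalProjectionOnto (A x) : X)) = A (A x)
      rw [map_sub, (show A (Nn.orthogonalProjectionOnto (A x) : X) = 0 from LinearMap.mem_ker.mp (Nn.orthogonalProjectionOnto (A x)).2), sub_zero]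
    · rintro ⟨q, rfl⟩
      have hmem := (Submodule.mem_inf.mp q.2).2
      obtain ⟨y', hy', zz, hzz, hsum⟩ := Submodule.mem_sup.mp hmem
      obtain ⟨x, rfl⟩ := hy'
      refine ⟨x, ?_⟩
      show A (A x) = A (q : X)
      rw [← hsum, ContinuousLinearMap.coe_coe, map_add, (show A zz = 0 from LinearMap.mem_ker.mp hzz), add_zero]
  rw [hseteq]
  exact hclosedT
end

section
/- Let X be a strictly convex, finite-dimensional complex Banach space with compatible semi-inner product, and A : X → X linear with X = R(A) ⊕ N(A). If φ(A) = π, then A has a negative real eigenvalue, i.e., there exist λ < 0 and z ≠ 0 with Az = λz. -/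
/-- In a strictly convex finite-dimensional space, if `X = R(A) ⊕ N(A)` and `φ(A) = π`,
then `A` has a negative real eigenvalue. -/
theorem negative_eigenvalue_of_angle_eq_pi
    (X : Type*) [NormedAddCommGroup X] [NormedSpace ℂ X]
    [FiniteDimensional ℂ X] [StrictConvexSpace ℝ X]
    (sip : SemiInnerProduct X) (A : X →ₗ[ℂ] X)
    (hsum : LinearMap.range A ⊔ LinearMap.ker A = ⊤)
    (hint : LinearMap.range A ⊓ LinearMap.ker A = ⊥)
    (hangle : sInf {r : ℝ | ∃ x : X, x ∉ LinearMap.ker A ∧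
      r = (sip.sip (A x) x).re / (‖A x‖ * ‖x‖)} = -1) :
    ∃ (l : ℝ) (z : X), l < 0 ∧ z ≠ 0 ∧ A z = (l : ℂ) • z := by
  classical
  set S : Set ℝ := {r : ℝ | ∃ x : X, x ∉ LinearMap.ker A ∧
      r = (sip.sip (A x) x).re / (‖A x‖ * ‖x‖)} with hS
  have hlb : ∀ r ∈ S, (-1 : ℝ) ≤ r := by
    rintro r ⟨x, hx, rfl⟩
    have hAx : A x ≠ 0 := by simpa [LinearMap.mem_ker] using hx
    have hx0 : x ≠ 0 := by rintro rfl; exact hx (by simp)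
    have hd : 0 < ‖A x‖ * ‖x‖ :=
      mul_pos (norm_pos_iff.mpr hAx) (norm_pos_iff.mpr hx0)
    rw [le_div_iff₀ hd]
    have h3 : |(sip.sip (A x) x).re| ≤ ‖sip.sip (A x) x‖ :=
      Complex.abs_re_le_norm _
    have := sip.abs_le (A x) x
    have h2 := neg_abs_le (sip.sip (A x) x).re
    linarith
  have hne : S.Nonempty := by
    rw [Set.nonempty_iff_ne_empty]
    intro h
    rw [h, Real.sInf_empty] at hangle
    norm_num at hangle
  have hbdd : BddBelow S := ⟨-1, hlb⟩
  -- key construction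
  have key : ∀ ε : ℝ, 0 < ε → ∃ y c : X, ‖y‖ = 1 ∧ ‖c‖ = 1 ∧
      c ∈ LinearMap.range A ∧ A y = ‖A y‖ • c ∧ 2 - ε ≤ ‖y - c‖ := by
    intro ε hε
    have hlt : sInf S < -1 + ε := by rw [hangle]; linarith
    obtain ⟨r, hrS, hr⟩ := (csInf_lt_iff hbdd hne).mp hlt
    obtain ⟨x, hx, rfl⟩ := hrS
    have hAx : A x ≠ 0 := by simpa [LinearMap.mem_ker] using hx
    have hx0 : x ≠ 0 := by rintro rfl; exact hx (by simp)
    have ha : (0:ℝ) < ‖x‖ := norm_pos_iff.mpr hx0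
    have hb : (0:ℝ) < ‖A x‖ := norm_pos_iff.mpr hAx
    have hre : (sip.sip (A x) x).re < (-1 + ε) * (‖A x‖ * ‖x‖) := by
      rwa [div_lt_iff₀ (mul_pos hb ha)] at hr
    set a : ℝ := ‖x‖ with ha'
    set b : ℝ := ‖A x‖ with hb'
    set t : ℝ := a / b with ht'
    have ht : 0 < t := div_pos ha hb
    refine ⟨a⁻¹ • x, b⁻¹ • A x, ?_, ?_, ?_, ?_, ?_⟩
    · rw [norm_smul, Real.norm_eq_abs, abs_of_pos (inv_pos.mpr ha)]
      field_simp
      exact ha'.symm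
    · rw [norm_smul, Real.norm_eq_abs, abs_of_pos (inv_pos.mpr hb)]
      field_simp
      exact hb'.symm
    · have h1 : ((b⁻¹ : ℝ) : ℂ) • A x ∈ LinearMap.range A :=
        Submodule.smul_mem _ _ ⟨x, rfl⟩
      rwa [Complex.coe_smul] at h1
    · have hAy : A (a⁻¹ • x) = a⁻¹ • A x := A.map_smul_of_tower _ x
      have hnorm : ‖a⁻¹ • A x‖ = a⁻¹ * b := by
        rw [norm_smul, Real.norm_eq_abs, abs_of_pos (inv_pos.mpr ha)]
      rw [hAy, hnorm, smul_smul]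
      congr 1
      field_simp
    · have h1 : a⁻¹ • x - b⁻¹ • A x = a⁻¹ • (x - t • A x) := by
        rw [smul_sub, smul_smul]
        congr 2
        field_simp [ht']
        rw [ht']; field_simp
      have hts : x - t • A x = x + (-(t:ℂ)) • A x := by
        rw [neg_smul, ← sub_eq_add_neg, Complex.coe_smul]
      have hsip : (sip.sip (x - t • A x) x).re = a^2 - t * (sip.sip (A x) x).re := by
        rw [hts, sip.add_left, sip.smul_left, sip.norm_sq]
        have h5 : ((-(t:ℂ)) * sip.sip (A x) x).re = -(t * (sip.sip (A x) x).re) := by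
          rw [← Complex.ofReal_neg, Complex.re_ofReal_mul]; ring
        rw [Complex.add_re, h5, ← Complex.ofReal_pow, Complex.ofReal_re, ha']
        ring
      have h2 : (2 - ε) * a^2 ≤ (sip.sip (x - t • A x) x).re := by
        rw [hsip]
        have htba : t * (b * a) = a^2 := by
          rw [ht']; field_simp
        nlinarith [mul_lt_mul_of_pos_left hre ht, htba]
      have h3 : (sip.sip (x - t • A x) x).re ≤ ‖x - t • A x‖ * a :=
        le_trans (Complex.re_le_norm _) (sip.abs_le _ _)
      have h4 : (2 - ε) * a ≤ ‖x - t • A x‖ := by nlinarith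
      rw [h1, norm_smul, Real.norm_eq_abs, abs_of_pos (inv_pos.mpr ha)]
      calc 2 - ε = a⁻¹ * ((2 - ε) * a) := by field_simp
        _ ≤ a⁻¹ * ‖x - t • A x‖ := by
            gcongr
  -- extract sequences
  choose y c hy hc hcr hAyc hge using fun n : ℕ => key (1/(n+1)) (by positivity)
  have hK : IsCompact ((Metric.sphere (0:X) 1) ×ˢ (Metric.sphere (0:X) 1)) :=
    (isCompact_sphere 0 1).prod (isCompact_sphere 0 1)
  have hmem : ∀ n : ℕ, (y n, c n) ∈ (Metric.sphere (0:X) 1) ×ˢ (Metric.sphere (0:X) 1) :=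
    fun n => ⟨by simp [hy n], by simp [hc n]⟩
  obtain ⟨⟨y₀, c₀⟩, hmem₀, φ, hφ, hlim⟩ := hK.tendsto_subseq hmem
  have hly : Filter.Tendsto (fun n => y (φ n)) Filter.atTop (nhds y₀) :=
    (continuous_fst.tendsto _).comp hlim
  have hlc : Filter.Tendsto (fun n => c (φ n)) Filter.atTop (nhds c₀) :=
    (continuous_snd.tendsto _).comp hlim
  have hy₀ : ‖y₀‖ = 1 := by simpa using hmem₀.1
  have hc₀ : ‖c₀‖ = 1 := by simpa using hmem₀.2
  have hAcont : Continuous A := A.continuous_of_finiteDimensional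
  have hAy₀ : Filter.Tendsto (fun n => A (y (φ n))) Filter.atTop (nhds (A y₀)) :=
    (hAcont.tendsto y₀).comp hly
  have hn₀ : Filter.Tendsto (fun n => ‖A (y (φ n))‖) Filter.atTop (nhds ‖A y₀‖) :=
    (continuous_norm.tendsto _).comp hAy₀
  have hAy₀' : A y₀ = ‖A y₀‖ • c₀ := by
    refine tendsto_nhds_unique hAy₀ ?_
    have : Filter.Tendsto (fun n => ‖A (y (φ n))‖ • c (φ n)) Filter.atTop
        (nhds (‖A y₀‖ • c₀)) := hn₀.smul hlc
    exact (Filter.Tendsto.congr (fun n => (hAyc (φ n)).symm) this)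
  have hcr₀ : c₀ ∈ LinearMap.range A := by
    have hcl : IsClosed ((LinearMap.range A : Submodule ℂ X) : Set X) :=
      Submodule.closed_of_finiteDimensional _
    exact hcl.mem_of_tendsto hlc (Filter.Eventually.of_forall fun n => hcr (φ n))
  have hdist : (2:ℝ) ≤ ‖y₀ - c₀‖ := by
    have hrhs : Filter.Tendsto (fun n => 2 - 1/((φ n : ℝ)+1)) Filter.atTop (nhds 2) := by
      have h0 : Filter.Tendsto (fun n : ℕ => 1/((n:ℝ)+1)) Filter.atTop (nhds 0) :=
        tendsto_one_div_add_atTop_nhds_zero_nat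
      have := (h0.comp hφ.tendsto_atTop).const_sub 2
      simpa using this
    have hlhs : Filter.Tendsto (fun n => ‖y (φ n) - c (φ n)‖) Filter.atTop
        (nhds ‖y₀ - c₀‖) := (continuous_norm.tendsto _).comp (hly.sub hlc)
    exact le_of_tendsto_of_tendsto' hrhs hlhs (fun n => by
      have := hge (φ n); push_cast at this ⊢; linarith)
  have heq : y₀ = -c₀ := by
    have h1 : ‖y₀ + -c₀‖ = ‖y₀‖ + ‖-c₀‖ := by
      rw [hy₀, norm_neg, hc₀]
      have h2 : ‖y₀ - c₀‖ ≤ 2 := by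
        calc ‖y₀ - c₀‖ ≤ ‖y₀‖ + ‖c₀‖ := norm_sub_le _ _
          _ = 2 := by rw [hy₀, hc₀]; norm_num
      have : y₀ + -c₀ = y₀ - c₀ := by rw [← sub_eq_add_neg]
      rw [this]; linarith
    exact eq_of_norm_eq_of_norm_add_eq (by rw [hy₀, norm_neg, hc₀]) h1
  have hc₀y : c₀ = -y₀ := by rw [heq, neg_neg]
  by_cases hρ : ‖A y₀‖ = 0
  · exfalso
    have hAc : A c₀ = 0 := by
      rw [hc₀y, map_neg]
      simp [norm_eq_zero.mp hρ]
    have : c₀ ∈ LinearMap.range A ⊓ LinearMap.ker A := ⟨hcr₀, LinearMap.mem_ker.mpr hAc⟩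
    rw [hint] at this
    simp only [Submodule.mem_bot] at this
    rw [this] at hc₀
    norm_num at hc₀
  · have hρpos : 0 < ‖A y₀‖ := lt_of_le_of_ne (norm_nonneg _) (Ne.symm hρ)
    refine ⟨-‖A y₀‖, y₀, by linarith, ?_, ?_⟩
    · intro h; rw [h] at hy₀; norm_num at hy₀
    · rw [hc₀y, smul_neg] at hAy₀'
      rw [Complex.coe_smul, neg_smul]
      exact hAy₀'
end

section
/- For the bilateral shift A on ℓ²(ℤ), for every nonzero complex number t, inf{Re⟨(tA)x, x⟩/‖(tA)x‖ : ‖x‖ = 1} = −1; i.e., φ(tA) = π for all t ≠ 0, even though A is unitary and hence X = R(A) ⊕ N(A) trivially. -/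
open scoped ENNReal

private lemma shift_norm_eq (A : lp (fun _ : ℤ => ℂ) 2 →L[ℂ] lp (fun _ : ℤ => ℂ) 2)
    (hA : ∀ (x : lp (fun _ : ℤ => ℂ) 2) (n : ℤ), (A x : ∀ _ : ℤ, ℂ) n = x (n - 1))
    (x : lp (fun _ : ℤ => ℂ) 2) : ‖A x‖ = ‖x‖ := by
  have hp : 0 < (2 : ℝ≥0∞).toReal := by norm_num
  have h1 := lp.norm_rpow_eq_tsum hp (A x)
  have h2 := lp.norm_rpow_eq_tsum hp x
  have h3 : ∑' n : ℤ, ‖(A x : ∀ _ : ℤ, ℂ) n‖ ^ (2:ℝ≥0∞).toReal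
      = ∑' n : ℤ, ‖x n‖ ^ (2:ℝ≥0∞).toReal := by
    have := Equiv.tsum_eq (Equiv.subRight (1:ℤ)) (fun n => ‖x n‖ ^ (2:ℝ≥0∞).toReal)
    rw [← this]
    exact tsum_congr fun n => by rw [hA]; rfl
  have h4 : ‖A x‖ ^ (2:ℝ≥0∞).toReal = ‖x‖ ^ (2:ℝ≥0∞).toReal := by rw [h1, h2, h3]
  have e1 : ((2:ℝ≥0∞).toReal) = ((2:ℕ):ℝ) := by norm_num
  rw [e1, Real.rpow_natCast, Real.rpow_natCast] at h4
  nlinarith [norm_nonneg (A x), norm_nonneg x]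

/-- For the bilateral shift `A` on `ℓ²(ℤ)` and every `t ≠ 0`, the cosine of `tA` equals
`-1`, i.e. `φ(tA) = π`. -/
theorem bilateral_shift_angle_eq_pi
    (A : lp (fun _ : ℤ => ℂ) 2 →L[ℂ] lp (fun _ : ℤ => ℂ) 2)
    (hA : ∀ (x : lp (fun _ : ℤ => ℂ) 2) (n : ℤ), (A x : ∀ _ : ℤ, ℂ) n = x (n - 1))
    (t : ℂ) (ht : t ≠ 0) :
    sInf {r : ℝ | ∃ x : lp (fun _ : ℤ => ℂ) 2, ‖x‖ = 1 ∧
      r = (inner ℂ (t • A x) x : ℂ).re / ‖t • A x‖} = -1 := by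
  classical
  set S := {r : ℝ | ∃ x : lp (fun _ : ℤ => ℂ) 2, ‖x‖ = 1 ∧
      r = (inner ℂ (t • A x) x : ℂ).re / ‖t • A x‖} with hS
  set a : ℝ := ‖t‖ with ha
  have ha0 : 0 < a := by simpa [ha] using norm_pos_iff.mpr ht
  -- lower bound
  have hlb : ∀ r ∈ S, -1 ≤ r := by
    rintro r ⟨x, hx, rfl⟩
    set y := t • A x with hy
    by_cases h0 : ‖y‖ = 0
    · rw [h0, div_zero]; norm_num
    · have h0' : 0 < ‖y‖ := lt_of_le_of_ne (norm_nonneg _) (Ne.symm h0)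
      rw [le_div_iff₀ h0']
      have h1 : ‖(inner ℂ y x : ℂ)‖ ≤ ‖y‖ * ‖x‖ := norm_inner_le_norm y x
      have h2 : -(‖(inner ℂ y x : ℂ)‖) ≤ (inner ℂ y x : ℂ).re := by
        have h3 := Complex.abs_re_le_norm (inner ℂ y x : ℂ)
        have h4 := neg_abs_le ((inner ℂ y x : ℂ).re)
        linarith
      rw [hx, mul_one] at h1
      nlinarith
  have hbdd : BddBelow S := ⟨-1, hlb⟩
  -- the family of elements
  have hmem : ∀ N : ℕ, 0 < N → (-(((N:ℝ)-1)/N)) ∈ S := by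
    intro N hN
    set ω : ℂ := -(t / (a : ℂ)) with hω
    have hωn : ‖ω‖ = 1 := by
      rw [hω, norm_neg, norm_div, ← ha, Complex.norm_real,
        Real.norm_of_nonneg ha0.le, div_self ha0.ne']
    have hω0 : ω ≠ 0 := fun h => by simp [h] at hωn
    set c : ℝ := (Real.sqrt N)⁻¹ with hc
    have hc0 : 0 < c := by
      rw [hc]
      exact inv_pos.2 (Real.sqrt_pos.2 (by exact_mod_cast hN))
    have hc2 : (N:ℝ) * c^2 = 1 := by
      rw [hc, ← Real.sqrt_inv, Real.sq_sqrt (by positivity)]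
      field_simp
    set f : ℤ → ℂ := fun n => if n ∈ Finset.Ico (0:ℤ) (N:ℤ) then (c : ℂ) * ω ^ n else 0 with hfdef
    have hsupp : ∀ n ∉ Finset.Ico (0:ℤ) (N:ℤ), f n = 0 := fun n hn => by
      simp only [hfdef, if_neg hn]
    have hf : Memℓp f 2 := by
      refine Memℓp.of_exponent_ge (memℓp_zero ?_) (by norm_num)
      exact Set.Finite.subset (Finset.Ico (0:ℤ) (N:ℤ)).finite_toSet
        (fun n hn => by by_contra h; exact hn (hsupp n h))
    set x : lp (fun _ : ℤ => ℂ) 2 := ⟨f, hf⟩ with hxdef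
    have hcoe : ∀ n : ℤ, (x : ∀ _ : ℤ, ℂ) n = f n := fun n => rfl
    -- norm of x is 1
    have hp : 0 < (2 : ℝ≥0∞).toReal := by norm_num
    have hxnorm : ‖x‖ = 1 := by
      have h1 := lp.norm_rpow_eq_tsum hp x
      have hval : ∀ n : ℤ, ‖(x : ∀ _ : ℤ, ℂ) n‖ ^ (2:ℝ≥0∞).toReal
          = if n ∈ Finset.Ico (0:ℤ) (N:ℤ) then c^2 else 0 := by
        intro n
        rw [hcoe]
        by_cases hn : n ∈ Finset.Ico (0:ℤ) (N:ℤ)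
        · have : ‖f n‖ = c := by
            simp only [hfdef, if_pos hn, norm_mul, norm_zpow, hωn, one_zpow, mul_one,
              Complex.norm_real, Real.norm_of_nonneg hc0.le]
          rw [this, if_pos hn]
          have e1 : ((2:ℝ≥0∞).toReal) = ((2:ℕ):ℝ) := by norm_num
          rw [e1, Real.rpow_natCast]
        · rw [hsupp n hn, if_neg hn]
          simp
      have h2 : ∑' n : ℤ, ‖(x : ∀ _ : ℤ, ℂ) n‖ ^ (2:ℝ≥0∞).toReal = N * c^2 := by
        rw [tsum_congr hval, tsum_eq_sum (s := Finset.Ico (0:ℤ) (N:ℤ))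
          (fun n hn => by rw [if_neg hn])]
        rw [Finset.sum_ite_mem, Finset.inter_self, Finset.sum_const, Int.card_Ico]
        simp [nsmul_eq_mul]
      rw [h2, hc2] at h1
      have e1 : ((2:ℝ≥0∞).toReal) = ((2:ℕ):ℝ) := by norm_num
      rw [e1, Real.rpow_natCast] at h1
      nlinarith [norm_nonneg x]
    -- inner product
    have hAnorm : ‖A x‖ = 1 := (shift_norm_eq A hA x).trans hxnorm
    have hinner : (inner ℂ (A x) x : ℂ) = ((N:ℂ)-1) * ((c:ℂ)^2 * ω) := by
      rw [lp.inner_eq_tsum]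
      have hterm : ∀ n : ℤ, (inner ℂ ((A x : ∀ _ : ℤ, ℂ) n) ((x : ∀ _ : ℤ, ℂ) n) : ℂ)
          = if n ∈ Finset.Ico (1:ℤ) (N:ℤ) then (c:ℂ)^2 * ω else 0 := by
        intro n
        rw [RCLike.inner_apply', hA, hcoe, hcoe]
        by_cases hn : n ∈ Finset.Ico (1:ℤ) (N:ℤ)
        · rw [if_pos hn]
          rw [Finset.mem_Ico] at hn
          have hn1 : n - 1 ∈ Finset.Ico (0:ℤ) (N:ℤ) := by
            rw [Finset.mem_Ico]; omega
          have hn2 : n ∈ Finset.Ico (0:ℤ) (N:ℤ) := by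
            rw [Finset.mem_Ico]; omega
          simp only [hfdef, if_pos hn1, if_pos hn2]
          have hsplit : ω ^ n = ω ^ (n-1) * ω := by
            rw [← zpow_add_one₀ hω0]; ring_nf
          rw [hsplit]
          rw [map_mul]
          have hunit : (starRingEnd ℂ) (ω ^ (n-1)) * ω ^ (n-1) = 1 := by
            rw [mul_comm, Complex.mul_conj]
            have : Complex.normSq (ω ^ (n-1)) = 1 := by
              rw [← Complex.sq_norm, norm_zpow, hωn, one_zpow]
              norm_num
            rw [this]; norm_num
          have hcr : (starRingEnd ℂ) ((c:ℂ)) = (c:ℂ) := Complex.conj_ofReal c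
          calc (starRingEnd ℂ) ((c:ℂ)) * (starRingEnd ℂ) (ω ^ (n-1)) * ((c:ℂ) * (ω ^ (n-1) * ω))
              = ((c:ℂ) * (c:ℂ)) * ((starRingEnd ℂ) (ω ^ (n-1)) * ω ^ (n-1)) * ω := by
                rw [hcr]; ring
            _ = (c:ℂ)^2 * ω := by rw [hunit]; ring
        · rw [if_neg hn]
          rw [Finset.mem_Ico, not_and_or] at hn
          rcases hn with hn | hn
          · have : f (n-1) = 0 := hsupp _ (by rw [Finset.mem_Ico]; omega)
            rw [this, map_zero, zero_mul]
          · have : f n = 0 := hsupp _ (by rw [Finset.mem_Ico]; omega)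
            rw [this, mul_zero]
      rw [tsum_congr hterm, tsum_eq_sum (s := Finset.Ico (1:ℤ) (N:ℤ))
        (fun n hn => by rw [if_neg hn])]
      rw [Finset.sum_ite_mem, Finset.inter_self, Finset.sum_const, Int.card_Ico]
      have hcard : (((N:ℤ) - 1).toNat : ℂ) = (N:ℂ) - 1 := by
        have : ((N:ℤ) - 1).toNat = N - 1 := by omega
        rw [this]
        push_cast [Nat.cast_sub (by omega : 1 ≤ N)]
        ring
      rw [nsmul_eq_mul, hcard]
    have hconj : (starRingEnd ℂ) t * ω = -(a:ℂ) := by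
      rw [hω]
      have hmc : (starRingEnd ℂ) t * t = ((a:ℂ))^2 := by
        rw [mul_comm, Complex.mul_conj, ← Complex.sq_norm, ← ha]
        push_cast
        ring
      have haC : (a:ℂ) ≠ 0 := by exact_mod_cast ha0.ne'
      field_simp
      linear_combination -hmc
    have hinner2 : (inner ℂ (t • A x) x : ℂ) = -((a * (((N:ℝ)-1) * c^2) : ℝ) : ℂ) := by
      rw [inner_smul_left, hinner]
      push_cast
      linear_combination (((N:ℂ)-1) * (c:ℂ)^2) * hconj
    have hnorm2 : ‖t • A x‖ = a := by
      rw [norm_smul, hAnorm, mul_one, ha]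
    refine ⟨x, hxnorm, ?_⟩
    rw [hinner2, hnorm2]
    have hcc : c^2 = ((N:ℝ))⁻¹ := by
      have hNne : (N:ℝ) ≠ 0 := by positivity
      field_simp at hc2 ⊢
      linarith
    simp only [Complex.neg_re, Complex.ofReal_re]
    rw [hcc]
    have hNne : (N:ℝ) ≠ 0 := by positivity
    field_simp
  -- conclusion
  refine le_antisymm ?_ (le_csInf ⟨_, hmem 1 one_pos⟩ hlb)
  have hseq : Filter.Tendsto (fun N : ℕ => -(((N:ℝ)-1)/N)) Filter.atTop (nhds (-1)) := by
    have h0 : Filter.Tendsto (fun N : ℕ => 1/(N:ℝ)) Filter.atTop (nhds 0) :=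
      tendsto_one_div_atTop_nhds_zero_nat
    have hcg : (fun N : ℕ => -(((N:ℝ)-1)/N)) =ᶠ[Filter.atTop] (fun N : ℕ => -1 + 1/(N:ℝ)) := by
      filter_upwards [Filter.eventually_gt_atTop 0] with N hN
      have hNne : (N:ℝ) ≠ 0 := by positivity
      field_simp
      ring
    rw [Filter.tendsto_congr' hcg]
    simpa using tendsto_const_nhds.add h0
  exact ge_of_tendsto hseq (Filter.eventually_atTop.2
    ⟨1, fun N hN => csInf_le hbdd (hmem N hN)⟩)
end

section
/- Let A be a bounded linear operator on a complex Banach space X with 0 ∈ ∂ co̅ V(A), the boundary of the closed convex hull of the spatial numerical range of A. Then α(A) ≤ 1, i.e., N(A²) = N(A). -/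
open NormedSpace

/-- Every real-linear functional on `ℂ` is determined by its values on `1` and `I`. -/
lemma nirschl_aux_apply (f : ℂ →ₗ[ℝ] ℝ) (z : ℂ) : f z = z.re * f 1 + z.im * f Complex.I := by
  have hz : z = z.re • (1 : ℂ) + z.im • Complex.I := by
    simp [Complex.real_smul]
  calc f z = f (z.re • (1 : ℂ) + z.im • Complex.I) := by rw [← hz]
  _ = z.re * f 1 + z.im * f Complex.I := by
      rw [map_add, map_smul, map_smul]; simp

/-- Supporting "hyperplane" at a frontier point of a closed convex subset of `ℂ`:
there is `t ≠ 0` with `Re (t z) ≥ 0` on the set. -/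
lemma nirschl_aux_sep (S : Set ℂ) (hconv : Convex ℝ S) (hcl : IsClosed S)
    (h0 : (0 : ℂ) ∈ frontier S) :
    ∃ t : ℂ, t ≠ 0 ∧ ∀ z ∈ S, 0 ≤ (t * z).re := by
  have h0i : (0 : ℂ) ∉ interior S := h0.2
  have h0S : (0 : ℂ) ∈ S := hcl.closure_eq ▸ h0.1
  -- produce a nonzero real-linear functional nonpositive on `S`
  have key : ∃ f : ℂ →ₗ[ℝ] ℝ, (f 1 ≠ 0 ∨ f Complex.I ≠ 0) ∧ ∀ z ∈ S, f z ≤ 0 := by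
    by_cases hne : (interior S).Nonempty
    · obtain ⟨y, hy⟩ := hne
      obtain ⟨f, hf⟩ := geometric_hahn_banach_open_point hconv.interior isOpen_interior h0i
      have hfy : f y < 0 := by simpa using hf y hy
      refine ⟨f.toLinearMap, ?_, ?_⟩
      · by_contra hc
        push_neg at hc
        have e1 : f (1:ℂ) = 0 := hc.1
        have e2 : f Complex.I = 0 := hc.2
        have hfy0 : f y = 0 := by
          have h := nirschl_aux_apply f.toLinearMap y
          simp only [ContinuousLinearMap.coe_coe] at h
          rw [h, e1, e2]; ring
        linarith
      · intro z hz
        have hzc : z ∈ closure S := subset_closure hz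
        have hlt : ∀ θ : ℝ, θ ∈ Set.Ioo (0:ℝ) 1 → θ * f y + (1 - θ) * f z ≤ 0 := by
          intro θ hθ
          have hmem : θ • y + (1 - θ) • z ∈ interior S :=
            hconv.combo_interior_closure_mem_interior hy hzc hθ.1 (by linarith [hθ.2])
              (by ring)
          have := hf _ hmem
          simp only [map_add, map_smul, smul_eq_mul, map_zero] at this
          linarith
        have htend : Filter.Tendsto (fun θ : ℝ => θ * f y + (1 - θ) * f z)
            (nhdsWithin 0 (Set.Ioi 0)) (nhds (f z)) := by
          have hcont : Continuous (fun θ : ℝ => θ * f y + (1 - θ) * f z) := by continuity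
          have h2 := (hcont.tendsto 0).mono_left
            (nhdsWithin_le_nhds (s := Set.Ioi (0:ℝ)))
          simpa using h2
        refine le_of_tendsto htend ?_
        filter_upwards [Ioo_mem_nhdsGT_of_mem (Set.mem_Ico.2 ⟨le_refl 0, one_pos⟩)] with θ hθ
        exact hlt θ hθ
    · -- degenerate case: `S` spans a proper subspace
      have hspan : Submodule.span ℝ S < ⊤ := by
        rw [lt_top_iff_ne_top]
        intro htop
        have haff : affineSpan ℝ S = ⊤ := by
          have h1 : (affineSpan ℝ (insert (0:ℂ) S) : Set ℂ) = (Submodule.span ℝ S : Set ℂ) :=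
            affineSpan_insert_zero S
          rw [Set.insert_eq_self.2 h0S, htop] at h1
          exact SetLike.coe_injective (by simpa using h1)
        rw [← hconv.interior_nonempty_iff_affineSpan_eq_top] at haff
        exact hne haff
      obtain ⟨f, hf0, hfbot⟩ :=
        Submodule.exists_dual_map_eq_bot_of_lt_top hspan inferInstance
      refine ⟨f, ?_, ?_⟩
      · by_contra hc
        push_neg at hc
        apply hf0
        ext z
        rw [nirschl_aux_apply f z, hc.1, hc.2]
        simp
      · intro z hz
        have : f z ∈ Submodule.map f (Submodule.span ℝ S) :=
          Submodule.mem_map_of_mem (Submodule.subset_span hz)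
        rw [hfbot] at this
        simp only [Submodule.mem_bot] at this
        rw [this]
  obtain ⟨f, hf0, hfle⟩ := key
  refine ⟨Complex.mk (-(f 1)) (f Complex.I), ?_, ?_⟩
  · intro hc
    rw [Complex.ext_iff] at hc
    simp only [Complex.zero_re, Complex.zero_im, neg_eq_zero] at hc
    rcases hf0 with h | h
    · exact h hc.1
    · exact h hc.2
  · intro z hz
    have := hfle z hz
    rw [nirschl_aux_apply f z] at this
    simp only [Complex.mul_re]
    nlinarith

/-- Nirschl–Schneider: if `0` lies in the boundary of the closed convex hull of the
spatial numerical range of `A`, then the ascent of `A` is at most `1`. -/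
theorem ascent_le_one_of_zero_mem_boundary_numerical_range
    (X : Type*) [NormedAddCommGroup X] [NormedSpace ℂ X] [CompleteSpace X]
    (A : X →L[ℂ] X)
    (h : (0 : ℂ) ∈ frontier (closure (convexHull ℝ
      {z : ℂ | ∃ (x : X) (f : StrongDual ℂ X), ‖x‖ = 1 ∧ f x = (‖x‖ : ℂ) ^ 2 ∧ ‖f‖ = ‖x‖ ∧
        z = f (A x)}))) :
    LinearMap.ker (A ∘L A : X →ₗ[ℂ] X) = LinearMap.ker (A : X →ₗ[ℂ] X) := by
  set V : Set ℂ := {z : ℂ | ∃ (x : X) (f : StrongDual ℂ X), ‖x‖ = 1 ∧ f x = (‖x‖ : ℂ) ^ 2 ∧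
      ‖f‖ = ‖x‖ ∧ z = f (A x)} with hV
  obtain ⟨t, ht0, htS⟩ := nirschl_aux_sep (closure (convexHull ℝ V))
    ((convex_convexHull ℝ V).closure) isClosed_closure h
  have htV : ∀ z ∈ V, 0 ≤ (t * z).re := fun z hz =>
    htS z (subset_closure (subset_convexHull ℝ V hz))
  -- key accretivity estimate
  have claim : ∀ (y : X) (s : ℝ), 0 ≤ s → ‖y‖ ≤ ‖y + ((s : ℂ) * t) • A y‖ := by
    intro y s hs
    rcases eq_or_ne y 0 with rfl | hy0
    · simp
    · obtain ⟨g, hg1, hgy⟩ := exists_dual_vector ℂ y (norm_ne_zero_iff.2 hy0)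
      have hny : (0:ℝ) < ‖y‖ := norm_pos_iff.2 hy0
      set x : X := (‖y‖⁻¹ : ℂ) • y with hx
      have hxnorm : ‖x‖ = 1 := by
        rw [hx, norm_smul]
        simp [abs_of_pos hny, inv_mul_cancel₀ hny.ne']
      have hgx : g x = (‖x‖ : ℂ) ^ 2 := by
        rw [hx, map_smul, hgy, hxnorm]
        simp [smul_eq_mul, inv_mul_cancel₀ (Complex.ofReal_ne_zero.2 hny.ne')]
      have hmem : g (A x) ∈ V := ⟨x, g, hxnorm, hgx, by rw [hg1, hxnorm], rfl⟩
      have hre : 0 ≤ (t * g (A x)).re := htV _ hmem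
      have hyx : y = (‖y‖ : ℂ) • x := by
        rw [hx, smul_smul, mul_inv_cancel₀ (Complex.ofReal_ne_zero.2 hny.ne'), one_smul]
      have hgw : (g (y + ((s : ℂ) * t) • A y)).re = ‖y‖ + s * ‖y‖ * (t * g (A x)).re := by
        rw [map_add, map_smul, hgy]
        have hAy : A y = (‖y‖ : ℂ) • A x := by
          conv_lhs => rw [hyx]
          rw [map_smul]
        rw [hAy, map_smul]
        simp only [smul_eq_mul, Complex.add_re]
        have : ((s : ℂ) * t * ((‖y‖ : ℂ) * g (A x))).re = s * ‖y‖ * (t * g (A x)).re := by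
          have h1 : (s : ℂ) * t * ((‖y‖ : ℂ) * g (A x)) = ((s * ‖y‖ : ℝ) : ℂ) * (t * g (A x)) := by
            push_cast; ring
          rw [h1, Complex.re_ofReal_mul]
        rw [this]
        simp
      have h1 : ‖y‖ ≤ (g (y + ((s : ℂ) * t) • A y)).re := by
        rw [hgw]
        nlinarith [mul_nonneg (mul_nonneg hs hny.le) hre]
      calc ‖y‖ ≤ (g (y + ((s : ℂ) * t) • A y)).re := h1
        _ ≤ ‖g (y + ((s : ℂ) * t) • A y)‖ := Complex.re_le_norm _
        _ ≤ ‖g‖ * ‖y + ((s : ℂ) * t) • A y‖ := g.le_opNorm _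
        _ = ‖y + ((s : ℂ) * t) • A y‖ := by rw [hg1, one_mul]
  ext y
  simp only [LinearMap.mem_ker, ContinuousLinearMap.coe_coe, ContinuousLinearMap.coe_comp',
    Function.comp_apply]
  constructor
  · intro hy2
    by_contra hAy
    have hy0 : y ≠ 0 := by rintro rfl; exact hAy (by simp)
    have hny : (0:ℝ) < ‖y‖ := norm_pos_iff.2 hy0
    have hc : (0:ℝ) < ‖t • A y‖ := by
      rw [norm_smul]
      exact mul_pos (norm_pos_iff.2 ht0) (norm_pos_iff.2 hAy)
    set s : ℝ := 3 * ‖y‖ / ‖t • A y‖ with hsdef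
    have hs : 0 ≤ s := by positivity
    set y' : X := y - ((s : ℂ) * t) • A y with hy'
    have hAy' : A y' = A y := by
      rw [hy', map_sub, map_smul, hy2, smul_zero, sub_zero]
    have hkey : ‖y'‖ ≤ ‖y‖ := by
      have := claim y' s hs
      rw [hAy'] at this
      simpa [hy'] using this
    have hnorm' : ‖((s : ℂ) * t) • A y‖ = s * ‖t • A y‖ := by
      rw [norm_smul, norm_smul, norm_mul]
      simp [abs_of_nonneg hs, mul_assoc]
    have hlb : s * ‖t • A y‖ - ‖y‖ ≤ ‖y'‖ := by
      rw [hy', ← hnorm']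
      have := norm_sub_norm_le (((s : ℂ) * t) • A y) y
      rw [← norm_neg (((s : ℂ) * t) • A y - y)] at this
      simpa [neg_sub] using this
    have hsc : s * ‖t • A y‖ = 3 * ‖y‖ := by
      rw [hsdef, div_mul_cancel₀ _ hc.ne']
    rw [hsc] at hlb
    linarith
  · intro hy
    rw [hy, map_zero]
end

section
/- Let X be a complex Hilbert space and A : X → X a bounded linear operator with R(A) ⊥ N(A) and φ(A) > π/2. Then the angle of A equals the angle of its restriction to N(A)^⊥: φ(A) = φ(A|_{N(A)^⊥}). -/
/-- If `R(A) ⊥ N(A)` and `φ(A) > π/2`, then the angle of `A` equals the angle of its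
restriction to `N(A)^⊥`. -/
theorem angle_eq_angle_restriction
    (X : Type*) [NormedAddCommGroup X] [InnerProductSpace ℂ X] [CompleteSpace X]
    (A : X →L[ℂ] X)
    (hperp : ∀ x : X, ∀ y ∈ LinearMap.ker (A : X →ₗ[ℂ] X), (inner ℂ (A x) y : ℂ) = 0)
    (hangle : Real.pi / 2 < Real.arccos (sInf {r : ℝ | ∃ x : X, x ∉ LinearMap.ker (A : X →ₗ[ℂ] X) ∧
      r = (inner ℂ (A x) x : ℂ).re / (‖A x‖ * ‖x‖)})) :
    Real.arccos (sInf {r : ℝ | ∃ x : X, x ∉ LinearMap.ker (A : X →ₗ[ℂ] X) ∧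
      r = (inner ℂ (A x) x : ℂ).re / (‖A x‖ * ‖x‖)}) =
    Real.arccos (sInf {r : ℝ | ∃ x : X, x ∈ (LinearMap.ker (A : X →ₗ[ℂ] X))ᗮ ∧ x ≠ 0 ∧
      r = (inner ℂ (A x) x : ℂ).re / (‖A x‖ * ‖x‖)}) := by
  set K := LinearMap.ker (A : X →ₗ[ℂ] X) with hK
  set S1 := {r : ℝ | ∃ x : X, x ∉ K ∧ r = (inner ℂ (A x) x : ℂ).re / (‖A x‖ * ‖x‖)} with hS1
  set S2 := {r : ℝ | ∃ x : X, x ∈ Kᗮ ∧ x ≠ 0 ∧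
      r = (inner ℂ (A x) x : ℂ).re / (‖A x‖ * ‖x‖)} with hS2
  have hbd : ∀ x : X, x ∉ K → -1 ≤ (inner ℂ (A x) x : ℂ).re / (‖A x‖ * ‖x‖) := by
    intro x hx
    have hAx : A x ≠ 0 := fun h => hx (LinearMap.mem_ker.mpr h)
    have hx0 : x ≠ 0 := fun h => hx (by simp [h])
    have hpos : 0 < ‖A x‖ * ‖x‖ :=
      mul_pos (norm_pos_iff.mpr hAx) (norm_pos_iff.mpr hx0)
    rw [neg_le, ← neg_div, div_le_one hpos]
    calc -(inner ℂ (A x) x : ℂ).re ≤ |(inner ℂ (A x) x : ℂ).re| := neg_le_abs _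
      _ ≤ ‖(inner ℂ (A x) x : ℂ)‖ := Complex.abs_re_le_norm _
      _ ≤ ‖A x‖ * ‖x‖ := norm_inner_le_norm _ _
  have hsub : S2 ⊆ S1 := by
    rintro r ⟨x, hxo, hx0, rfl⟩
    refine ⟨x, fun hxK => hx0 ?_, rfl⟩
    have := (Submodule.mem_orthogonal Kᗮ x).mp (Submodule.le_orthogonal_orthogonal K hxK) x hxo
    simpa [inner_self_eq_zero] using this
  have bdd1 : BddBelow S1 := ⟨-1, by rintro r ⟨x, hx, rfl⟩; exact hbd x hx⟩
  have bdd2 : BddBelow S2 := bdd1.mono hsub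
  have S1ne : S1.Nonempty := by
    by_contra h
    rw [Set.not_nonempty_iff_eq_empty] at h
    rw [h, Real.sInf_empty, Real.arccos_zero] at hangle
    exact lt_irrefl _ hangle
  have hneg : sInf S1 < 0 := by
    by_contra h
    push_neg at h
    exact absurd (Real.arccos_le_pi_div_two.mpr h) (not_le.mpr hangle)
  have key : ∀ x : X, x ∉ K → ∃ s ∈ S2,
      ((inner ℂ (A x) x : ℂ).re < 0 → s ≤ (inner ℂ (A x) x : ℂ).re / (‖A x‖ * ‖x‖)) := by
    intro x hx
    set v := x - (Submodule.orthogonalProjectionOnto K x : X) with hv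
    have hvK : v ∈ Kᗮ := Submodule.sub_starProjection_mem_orthogonal (K := K) x
    have hAu : A ((Submodule.orthogonalProjectionOnto K x : X)) = 0 :=
      LinearMap.mem_ker.mp (Submodule.orthogonalProjectionOnto K x).2
    have hAv : A v = A x := by simp [hv, map_sub, hAu]; exact hAu
    have hv0 : v ≠ 0 := by
      intro h
      apply hx
      have hxu : x = (Submodule.orthogonalProjectionOnto K x : X) := sub_eq_zero.mp (hv ▸ h)
      rw [hxu]; exact (Submodule.orthogonalProjectionOnto K x).2
    have hAx : A x ≠ 0 := fun h => hx (LinearMap.mem_ker.mpr h)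
    have hx0 : x ≠ 0 := fun h => hx (by simp [h])
    have hinner : (inner ℂ (A v) v : ℂ) = inner ℂ (A x) x := by
      have hu := hperp x (Submodule.orthogonalProjectionOnto K x : X) (Submodule.orthogonalProjectionOnto K x).2
      rw [hv, inner_sub_right, hAv, hu, sub_zero]
    have hnorm : ‖v‖ ≤ ‖x‖ := by
      have h1 := Submodule.norm_sq_eq_add_norm_sq_projection x K
      have h2 : ‖(Submodule.orthogonalProjectionOnto Kᗮ x : X)‖ = ‖v‖ :=
        congrArg norm (Submodule.starProjection_orthogonal_val (K := K) x)
      rw [Submodule.norm_coe] at h2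
      nlinarith [norm_nonneg x, norm_nonneg v, norm_nonneg (Submodule.orthogonalProjectionOnto K x)]
    refine ⟨(inner ℂ (A v) v : ℂ).re / (‖A v‖ * ‖v‖), ⟨v, hvK, hv0, rfl⟩, ?_⟩
    intro hc
    have hvpos : 0 < ‖A v‖ * ‖v‖ :=
      mul_pos (norm_pos_iff.mpr (hAv ▸ hAx)) (norm_pos_iff.mpr hv0)
    have hxpos : 0 < ‖A x‖ * ‖x‖ :=
      mul_pos (norm_pos_iff.mpr hAx) (norm_pos_iff.mpr hx0)
    rw [hinner, div_le_div_iff₀ hvpos hxpos]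
    have hle : ‖A v‖ * ‖v‖ ≤ ‖A x‖ * ‖x‖ := by
      rw [hAv]; exact mul_le_mul_of_nonneg_left hnorm (norm_nonneg _)
    nlinarith [hc, hle, hvpos]
  obtain ⟨r0, hr0S, hr0⟩ := exists_lt_of_csInf_lt S1ne hneg
  obtain ⟨x0, hx0K, rfl⟩ := hr0S
  obtain ⟨s0, hs0S, hs0⟩ := key x0 hx0K
  have hc0 : (inner ℂ (A x0) x0 : ℂ).re < 0 := by
    by_contra h
    push_neg at h
    exact absurd hr0 (not_lt.mpr (div_nonneg h (by positivity)))
  have hs0neg : s0 < 0 := lt_of_le_of_lt (hs0 hc0) hr0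
  have S2ne : S2.Nonempty := ⟨s0, hs0S⟩
  have hinf2neg : sInf S2 < 0 := lt_of_le_of_lt (csInf_le bdd2 hs0S) hs0neg
  have h1 : sInf S1 ≤ sInf S2 := csInf_le_csInf bdd1 S2ne hsub
  have h2 : sInf S2 ≤ sInf S1 := by
    apply le_csInf S1ne
    rintro r ⟨x, hx, rfl⟩
    by_cases hc : (inner ℂ (A x) x : ℂ).re < 0
    · obtain ⟨s, hsS, hs⟩ := key x hx
      exact le_trans (csInf_le bdd2 hsS) (hs hc)
    · push_neg at hc
      have : (0 : ℝ) ≤ (inner ℂ (A x) x : ℂ).re / (‖A x‖ * ‖x‖) :=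
        div_nonneg hc (by positivity)
      linarith
  rw [le_antisymm h1 h2]
end

section
/- Let X be a complex Hilbert space and A : X → X an injective bounded linear operator with closed range such that no negative real number lies in σ(A) (i.e., σ(A) ∩ R_π = ∅, where R_π = {t ∈ ℂ : t < 0 real}). Then cos A = inf{Re⟨Ax, x⟩/(‖Ax‖‖x‖) : x ≠ 0} > −1, i.e., φ(A) < π. -/
set_option maxHeartbeats 1000000

/-- If `A` is injective with closed range on a Hilbert space and no negative real number
belongs to `σ(A)`, then `cos A > -1`, i.e. `φ(A) < π`. -/
theorem cos_gt_neg_one_of_spectrum_avoids_negative_ray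
    (X : Type*) [NormedAddCommGroup X] [InnerProductSpace ℂ X] [CompleteSpace X]
    (A : X →L[ℂ] X) (hinj : Function.Injective A)
    (hR : IsClosed ((LinearMap.range (A : X →ₗ[ℂ] X) : Submodule ℂ X) : Set X))
    (hspec : ∀ r : ℝ, r < 0 → (r : ℂ) ∉ spectrum ℂ A) :
    -1 < sInf {r : ℝ | ∃ x : X, x ≠ 0 ∧
      r = (inner ℂ (A x) x : ℂ).re / (‖A x‖ * ‖x‖)} := by
  set S := {r : ℝ | ∃ x : X, x ≠ 0 ∧
      r = (inner ℂ (A x) x : ℂ).re / (‖A x‖ * ‖x‖)} with hSdef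
  rcases Set.eq_empty_or_nonempty S with hSe | hSne
  · rw [hSe, Real.sInf_empty]; norm_num
  -- lower bound c with c * ‖x‖ ≤ ‖A x‖
  haveI : CompleteSpace (LinearMap.range (A : X →ₗ[ℂ] X)) := hR.completeSpace_coe
  obtain ⟨c, hc0, hc⟩ : ∃ c : ℝ, 0 < c ∧ ∀ x : X, c * ‖x‖ ≤ ‖A x‖ := by
    set A' : X →L[ℂ] (LinearMap.range (A : X →ₗ[ℂ] X)) :=
      A.codRestrict _ (fun x => LinearMap.mem_range_self _ x) with hA'
    have hker : LinearMap.ker (A' : X →ₗ[ℂ] (LinearMap.range (A : X →ₗ[ℂ] X))) = ⊥ := by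
      rw [ContinuousLinearMap.ker_codRestrict]
      exact LinearMap.ker_eq_bot.mpr hinj
    have hrange : LinearMap.range (A' : X →ₗ[ℂ] (LinearMap.range (A : X →ₗ[ℂ] X))) = ⊤ := by
      rw [LinearMap.range_eq_top]
      rintro ⟨y, x, rfl⟩
      exact ⟨x, rfl⟩
    let e := ContinuousLinearEquiv.ofBijective A' hker hrange
    set B : (LinearMap.range (A : X →ₗ[ℂ] X)) →L[ℂ] X := (e.symm : (LinearMap.range (A : X →ₗ[ℂ] X)) →L[ℂ] X) with hB
    refine ⟨(‖B‖ + 1)⁻¹, by positivity, fun x => ?_⟩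
    have h1 : ‖x‖ ≤ (‖B‖ + 1) * ‖A x‖ := by
      have h2 : e.symm (e x) = x := e.symm_apply_apply x
      have h3 : ‖(e x : X)‖ = ‖A x‖ := rfl
      calc ‖x‖ = ‖B (e x)‖ := by rw [hB]; rw [ContinuousLinearEquiv.coe_coe]; rw [h2]
        _ ≤ ‖B‖ * ‖e x‖ := B.le_opNorm _
        _ ≤ (‖B‖ + 1) * ‖A x‖ := by
            have h4 : ‖e x‖ = ‖A x‖ := h3
            rw [h4]
            nlinarith [norm_nonneg B, norm_nonneg (A x)]
    rw [inv_mul_le_iff₀ (by positivity)]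
    exact h1
  set M := ‖A‖ with hM
  have hcM : c ≤ M := by
    obtain ⟨r, x, hx, -⟩ := hSne
    have h1 := hc x
    have hx' : 0 < ‖x‖ := norm_pos_iff.mpr hx
    have hAx : ‖A x‖ ≤ M * ‖x‖ := A.le_opNorm x
    nlinarith
  have hM0 : 0 < M := lt_of_lt_of_le hc0 hcM
  -- units
  have hunit : ∀ t : ℝ, 0 < t → IsUnit (A + (t : ℂ) • (1 : X →L[ℂ] X)) := by
    intro t ht
    have h1 : ((-t : ℝ) : ℂ) ∉ spectrum ℂ A := hspec (-t) (by linarith)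
    rw [spectrum.notMem_iff] at h1
    have h2 : A + (t : ℂ) • (1 : X →L[ℂ] X) =
        -(algebraMap ℂ (X →L[ℂ] X) ((-t : ℝ) : ℂ) - A) := by
      rw [Algebra.algebraMap_eq_smul_one]
      push_cast
      module
    rw [h2]
    exact h1.neg
  -- uniform bound on inverses over Icc c M
  obtain ⟨K, hK⟩ : ∃ K : ℝ, ∀ t ∈ Set.Icc c M,
      ‖Ring.inverse (A + (t : ℂ) • (1 : X →L[ℂ] X))‖ ≤ K := by
    have hcont : ContinuousOn (fun t : ℝ => Ring.inverse (A + (t : ℂ) • (1 : X →L[ℂ] X)))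
        (Set.Icc c M) := by
      intro t ht
      obtain ⟨u, hu'⟩ := hunit t (lt_of_lt_of_le hc0 ht.1)
      have h1 : ContinuousAt (fun t : ℝ => A + (t : ℂ) • (1 : X →L[ℂ] X)) t := by
        fun_prop
      have h2 : ContinuousAt (Ring.inverse : (X →L[ℂ] X) → (X →L[ℂ] X))
          (A + (t : ℂ) • (1 : X →L[ℂ] X)) := by
        rw [← hu']; exact NormedRing.inverse_continuousAt u
      exact (ContinuousAt.comp (f := fun t : ℝ => A + (t : ℂ) • (1 : X →L[ℂ] X)) h2
        h1).continuousWithinAt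
    exact (isCompact_Icc).exists_bound_of_continuousOn hcont
  have hK0 : 0 ≤ K := le_trans (norm_nonneg _) (hK c ⟨le_refl c, hcM⟩)
  set δ : ℝ := (K + 1)⁻¹ with hδ
  have hδ0 : 0 < δ := by positivity
  have hδle : ∀ t ∈ Set.Icc c M, ∀ x : X, δ * ‖x‖ ≤ ‖A x + (t : ℂ) • x‖ := by
    intro t ht x
    have hu := hunit t (lt_of_lt_of_le hc0 ht.1)
    have hmul : Ring.inverse (A + (t : ℂ) • (1 : X →L[ℂ] X)) *
        (A + (t : ℂ) • (1 : X →L[ℂ] X)) = 1 := Ring.inverse_mul_cancel _ hu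
    have h2 : Ring.inverse (A + (t : ℂ) • (1 : X →L[ℂ] X)) (A x + (t : ℂ) • x) = x := by
      have h3 := congrArg (fun B : X →L[ℂ] X => B x) hmul
      simpa [ContinuousLinearMap.mul_apply, ContinuousLinearMap.add_apply,
        ContinuousLinearMap.smul_apply, ContinuousLinearMap.one_apply] using h3
    have h1 : ‖x‖ ≤ K * ‖A x + (t : ℂ) • x‖ := by
      calc ‖x‖ = ‖Ring.inverse (A + (t : ℂ) • (1 : X →L[ℂ] X)) (A x + (t : ℂ) • x)‖ := by
            rw [h2]
        _ ≤ ‖Ring.inverse (A + (t : ℂ) • (1 : X →L[ℂ] X))‖ * ‖A x + (t : ℂ) • x‖ :=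
            ContinuousLinearMap.le_opNorm _ _
        _ ≤ K * ‖A x + (t : ℂ) • x‖ :=
            mul_le_mul_of_nonneg_right (hK t ht) (norm_nonneg _)
    rw [hδ, inv_mul_le_iff₀ (by positivity)]
    nlinarith [norm_nonneg (A x + (t : ℂ) • x)]
  -- pointwise bound for members of S
  set ε : ℝ := δ ^ 2 / (2 * M ^ 2) with hε
  have hε0 : 0 < ε := by positivity
  have hεM : ε * (2 * M ^ 2) = δ ^ 2 := by
    rw [hε]; field_simp
  have key : ∀ r ∈ S, -1 + ε ≤ r := by
    rintro r ⟨x, hx, rfl⟩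
    have hxn : 0 < ‖x‖ := norm_pos_iff.mpr hx
    have hAxn : 0 < ‖A x‖ := lt_of_lt_of_le (by positivity) (hc x)
    set a := ‖A x‖ with ha
    set b := ‖x‖ with hb
    set R := (inner ℂ (A x) x : ℂ).re with hRe
    set t := a / b with htdef
    have ht0 : 0 < t := div_pos hAxn hxn
    have htmem : t ∈ Set.Icc c M := by
      constructor
      · rw [le_div_iff₀ hxn]; exact hc x
      · rw [div_le_iff₀ hxn]; exact A.le_opNorm x
    have htb : t * b = a := div_mul_cancel₀ a (ne_of_gt hxn)
    have hnorm : ‖A x + (t : ℂ) • x‖ ^ 2 = a ^ 2 + 2 * t * R + t ^ 2 * b ^ 2 := by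
      rw [@norm_add_sq ℂ]
      have h1 : (inner ℂ (A x) ((t : ℂ) • x) : ℂ) = (t : ℂ) * inner ℂ (A x) x :=
        inner_smul_right _ _ _
      have h2 : ‖(t : ℂ) • x‖ = t * b := by
        rw [norm_smul]
        simp [abs_of_pos ht0, hb]
      rw [h1, h2]
      have h3 : RCLike.re ((t : ℂ) * (inner ℂ (A x) x : ℂ)) = t * R := by
        simp [Complex.mul_re, hRe]
      rw [h3]
      ring
    have hlow := hδle t htmem x
    have hlow2 : δ ^ 2 * b ^ 2 ≤ a ^ 2 + 2 * t * R + t ^ 2 * b ^ 2 := by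
      rw [← hnorm]
      nlinarith [norm_nonneg (A x + (t : ℂ) • x), mul_nonneg hδ0.le hxn.le]
    have hre2 : δ ^ 2 * b ^ 3 ≤ 2 * a ^ 2 * b + 2 * a * R := by
      have hta : t ^ 2 * b ^ 2 = a ^ 2 := by nlinarith [htb]
      nlinarith [mul_le_mul_of_nonneg_right hlow2 hxn.le, htb]
    have hab : a ≤ M * b := A.le_opNorm x
    -- goal : -1 + ε ≤ R / (a * b)
    rw [le_div_iff₀ (by positivity : (0:ℝ) < a * b)]
    have h1 : ε * (2 * M ^ 2) * b ^ 3 ≤ 2 * a ^ 2 * b + 2 * a * R := by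
      rw [hεM]; exact hre2
    have h2 : a ^ 2 ≤ M ^ 2 * b ^ 2 := by nlinarith [hab, hAxn.le, hxn.le, hM0.le]
    nlinarith [h1, mul_nonneg (mul_nonneg hε0.le hxn.le) (sub_nonneg.2 h2), hAxn, hxn]
  have h := le_csInf hSne key
  linarith
end

section
/- Let X be a complex Hilbert space and A : X → X a bounded linear operator with closed range such that R(A) ⊥ N(A). If there exists ω ∈ [0, 2π) such that σ(A) ∩ R_ω = ∅, where R_ω = {t ∈ ℂ \ {0} : arg t = ω}, then X = R(A) ⊕ N(A). -/
set_option maxHeartbeats 1000000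
set_option synthInstance.maxHeartbeats 400000

/-- If `A` has closed range, `R(A) ⊥ N(A)`, and the spectrum of `A` misses some ray
emanating from the origin, then `X = R(A) ⊕ N(A)`. -/
theorem range_ker_complementary_of_spectrum_avoids_ray
    (X : Type*) [NormedAddCommGroup X] [InnerProductSpace ℂ X] [CompleteSpace X]
    (A : X →L[ℂ] X)
    (hR : IsClosed ((LinearMap.range (A : X →ₗ[ℂ] X) : Submodule ℂ X) : Set X))
    (hperp : ∀ x : X, ∀ y ∈ LinearMap.ker (A : X →ₗ[ℂ] X), (inner ℂ (A x) y : ℂ) = 0)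
    (hspec : ∃ ω ∈ Set.Ico (0 : ℝ) (2 * Real.pi),
      ∀ r : ℝ, 0 < r → (r : ℂ) * Complex.exp (ω * Complex.I) ∉ spectrum ℂ A) :
    LinearMap.range (A : X →ₗ[ℂ] X) ⊔ LinearMap.ker (A : X →ₗ[ℂ] X) = ⊤ ∧
    LinearMap.range (A : X →ₗ[ℂ] X) ⊓ LinearMap.ker (A : X →ₗ[ℂ] X) = ⊥ := by
  classical
  obtain ⟨ω, -, hray⟩ := hspec
  have hinf : LinearMap.range (A : X →ₗ[ℂ] X) ⊓ LinearMap.ker (A : X →ₗ[ℂ] X) = ⊥ := by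
    rw [Submodule.eq_bot_iff]
    rintro x ⟨⟨z, rfl⟩, hxN⟩
    exact inner_self_eq_zero.mp (hperp z (A z) hxN)
  refine ⟨?_, hinf⟩
  set R : Submodule ℂ X := LinearMap.range (A : X →ₗ[ℂ] X) with hRdef
  haveI : CompleteSpace R := hR.completeSpace_coe
  have hmem : ∀ x : X, A x ∈ R := fun x => LinearMap.mem_range_self (A : X →ₗ[ℂ] X) x
  -- open mapping constant for the corestriction of `A` onto its (closed, hence Banach) range
  let A' : X →L[ℂ] R := A.codRestrict R hmem
  have hsurj : Function.Surjective A' := by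
    rintro ⟨y, z, hz⟩
    exact ⟨z, Subtype.ext hz⟩
  obtain ⟨C, hC0, hC⟩ := A'.exists_preimage_norm_le hsurj
  -- `A` is bounded below on its range
  have hlow : ∀ x ∈ R, ‖x‖ ≤ C * ‖A x‖ := by
    intro x hx
    obtain ⟨x', hx', hnx'⟩ := hC (⟨A x, hmem x⟩ : R)
    have hAx' : A x' = A x := congrArg Subtype.val hx'
    have hker : x' - x ∈ LinearMap.ker (A : X →ₗ[ℂ] X) := by
      simp [LinearMap.mem_ker, map_sub, hAx']
    have hip : (inner ℂ x (x' - x) : ℂ) = 0 := by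
      obtain ⟨z, rfl⟩ := hx
      exact hperp z _ hker
    have h2 : ‖x‖ ≤ ‖x'‖ := by
      have hre : RCLike.re (inner ℂ x (x' - x) : ℂ) = 0 := by rw [hip]; simp
      have hsq := @norm_add_sq ℂ _ _ _ _ x (x' - x)
      rw [hre] at hsq
      have hxx : x + (x' - x) = x' := by abel
      rw [hxx] at hsq
      nlinarith [norm_nonneg x, norm_nonneg x', norm_nonneg (x' - x),
        sq_nonneg (‖x‖ - ‖x'‖)]
    have hnR : ‖(⟨A x, hmem x⟩ : R)‖ = ‖A x‖ := rfl
    calc ‖x‖ ≤ ‖x'‖ := h2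
      _ ≤ C * ‖(⟨A x, hmem x⟩ : R)‖ := hnx'
      _ = C * ‖A x‖ := by rw [hnR]
  -- the point on the ray we use
  set t : ℝ := (3 * C)⁻¹ with ht
  have ht0 : 0 < t := by positivity
  set lam : ℂ := (t : ℂ) * Complex.exp (ω * Complex.I) with hlam
  have hlamnorm : ‖lam‖ = t := by
    rw [hlam]
    simp [norm_mul, Complex.norm_exp_ofReal_mul_I,
      Complex.norm_real, abs_of_pos ht0]
  have hlam0 : lam ≠ 0 := by
    intro h
    rw [h, norm_zero] at hlamnorm
    exact ht0.ne hlamnorm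
  have hnotmem := hray t ht0
  rw [← hlam, spectrum.notMem_iff] at hnotmem
  obtain ⟨u, hu⟩ := hnotmem
  -- ambient identities for the resolvent
  have hami1 : ∀ w : X, lam • ((↑u⁻¹ : X →L[ℂ] X) w) - A ((↑u⁻¹ : X →L[ℂ] X) w) = w := by
    intro w
    have h1 := congrFun (congrArg DFunLike.coe u.mul_inv) w
    rw [hu] at h1
    simpa [ContinuousLinearMap.mul_apply, Algebra.algebraMap_eq_smul_one,
      ContinuousLinearMap.sub_apply, ContinuousLinearMap.smul_apply,
      ContinuousLinearMap.one_apply] using h1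
  have hami2 : ∀ w : X, (↑u⁻¹ : X →L[ℂ] X) (lam • w - A w) = w := by
    intro w
    have h1 := congrFun (congrArg DFunLike.coe u.inv_mul) w
    rw [hu] at h1
    simpa [ContinuousLinearMap.mul_apply, Algebra.algebraMap_eq_smul_one,
      ContinuousLinearMap.sub_apply, ContinuousLinearMap.smul_apply,
      ContinuousLinearMap.one_apply] using h1
  -- the resolvent maps the range into itself
  have hQmem : ∀ y ∈ R, (↑u⁻¹ : X →L[ℂ] X) y ∈ R := by
    intro y hy
    set x := (↑u⁻¹ : X →L[ℂ] X) y with hxdef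
    have hux : lam • x - A x = y := hami1 y
    have hxeq : x = lam⁻¹ • (y + A x) := by
      have : lam • x = y + A x := by
        rw [← hux]; abel
      rw [← this, smul_smul, inv_mul_cancel₀ hlam0, one_smul]
    rw [hxeq]
    exact R.smul_mem _ (R.add_mem hy (hmem x))
  -- restrictions to the range
  let B : R →L[ℂ] R := ((A.comp R.subtypeL).codRestrict R (fun v => hmem v))
  let Q' : R →L[ℂ] R := (((↑u⁻¹ : X →L[ℂ] X).comp R.subtypeL).codRestrict R
    (fun v => hQmem v v.2))
  have hBapp : ∀ v : R, (B v : X) = A v := fun v => rfl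
  have hQapp : ∀ v : R, (Q' v : X) = (↑u⁻¹ : X →L[ℂ] X) v := fun v => rfl
  have key1 : (lam • (1 : R →L[ℂ] R) - B) * Q' = 1 := by
    ext v
    push_cast [ContinuousLinearMap.mul_apply, ContinuousLinearMap.sub_apply,
      ContinuousLinearMap.smul_apply, ContinuousLinearMap.one_apply, hBapp, hQapp]
    exact hami1 ↑v
  have key2 : Q' * (lam • (1 : R →L[ℂ] R) - B) = 1 := by
    ext v
    push_cast [ContinuousLinearMap.mul_apply, ContinuousLinearMap.sub_apply,
      ContinuousLinearMap.smul_apply, ContinuousLinearMap.one_apply, hBapp, hQapp]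
    exact hami2 ↑v
  set u' : (R →L[ℂ] R)ˣ :=
    { val := lam • 1 - B, inv := Q', val_inv := key1, inv_val := key2 } with hu'
  -- norm bound on the restricted resolvent
  have hQ'bound : ∀ w : R, ‖Q' w‖ ≤ (3 * C / 2) * ‖w‖ := by
    intro w
    set v : R := Q' w with hv
    have hw : lam • v - B v = w := by
      have := congrFun (congrArg DFunLike.coe key1) w
      simpa [ContinuousLinearMap.mul_apply, ContinuousLinearMap.sub_apply,
        ContinuousLinearMap.smul_apply, ContinuousLinearMap.one_apply] using this
    have hBv : ‖(v : X)‖ ≤ C * ‖B v‖ := by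
      have := hlow (v : X) v.2
      rwa [← hBapp] at this
    have hnv : ‖v‖ = ‖(v : X)‖ := rfl
    have hBw : ‖B v‖ ≥ ‖v‖ / C := by
      rw [hnv]
      rw [ge_iff_le, div_le_iff₀ hC0]
      calc ‖(v : X)‖ ≤ C * ‖B v‖ := hBv
        _ = ‖B v‖ * C := by ring
    have htri : ‖w‖ ≥ ‖B v‖ - ‖lam • v‖ := by
      rw [← hw]
      have := norm_sub_norm_le (lam • v) (B v)
      have h2 := norm_sub_rev (lam • v) (B v)
      calc ‖B v‖ - ‖lam • v‖ ≤ ‖B v - lam • v‖ := norm_sub_norm_le _ _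
        _ = ‖lam • v - B v‖ := (norm_sub_rev _ _)
    have hlsv : ‖lam • v‖ = t * ‖v‖ := by rw [norm_smul, hlamnorm]
    have hkey : ‖w‖ ≥ (2 / (3 * C)) * ‖v‖ := by
      have h3 : ‖v‖ / C - t * ‖v‖ = (2 / (3 * C)) * ‖v‖ := by
        rw [ht]; field_simp; ring
      calc ‖w‖ ≥ ‖B v‖ - ‖lam • v‖ := htri
        _ ≥ ‖v‖ / C - t * ‖v‖ := by rw [hlsv]; linarith [hBw]
        _ = (2 / (3 * C)) * ‖v‖ := h3
    have h4 : (0:ℝ) < 2 / (3 * C) := by positivity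
    rw [ge_iff_le] at hkey
    have h5 : ‖v‖ ≤ ‖w‖ / (2 / (3 * C)) := by
      rw [le_div_iff₀ h4, mul_comm]; exact hkey
    have h6 : ‖w‖ / (2 / (3 * C)) = 3 * C / 2 * ‖w‖ := by
      field_simp
    rw [h6] at h5
    exact h5
  have hzlt : ‖lam • Q'‖ < 1 := by
    have hb : ‖lam • Q'‖ ≤ 1 / 2 := by
      apply ContinuousLinearMap.opNorm_le_bound _ (by norm_num)
      intro w
      rw [ContinuousLinearMap.smul_apply, norm_smul, hlamnorm]
      calc t * ‖Q' w‖ ≤ t * ((3 * C / 2) * ‖w‖) := by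
            apply mul_le_mul_of_nonneg_left (hQ'bound w) ht0.le
        _ = (t * (3 * C)) * (‖w‖ / 2) := by ring
        _ = 1 / 2 * ‖w‖ := by
            rw [ht, inv_mul_cancel₀ (by positivity : (3*C) ≠ 0)]; ring
    linarith
  have hUnitB : IsUnit B := by
    have kp : ∀ v : R, (lam • (1 : R →L[ℂ] R) - B) (Q' v) = v := by
      intro v
      have h1 := congrFun (congrArg DFunLike.coe key1) v
      simpa [ContinuousLinearMap.mul_apply] using h1
    have h7 : ∀ v : R, (lam • (1 : R →L[ℂ] R) - B) (v - lam • Q' v) = -(B v) := by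
      intro v
      rw [map_sub, map_smul, kp]
      simp only [ContinuousLinearMap.sub_apply, ContinuousLinearMap.smul_apply,
        ContinuousLinearMap.one_apply]
      abel
    have hBeq : B = -(↑u' * ↑(Units.oneSub (lam • Q') hzlt)) := by
      refine ContinuousLinearMap.ext fun v => ?_
      have hval : (↑u' : R →L[ℂ] R) = lam • 1 - B := rfl
      have h8 : (↑(Units.oneSub (lam • Q') hzlt) : R →L[ℂ] R) v = v - lam • Q' v := by
        rw [Units.val_oneSub]
        simp only [ContinuousLinearMap.sub_apply, ContinuousLinearMap.smul_apply,
          ContinuousLinearMap.one_apply]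
      rw [ContinuousLinearMap.neg_apply, ContinuousLinearMap.mul_apply, h8, hval, h7, neg_neg]
    rw [hBeq]
    exact ((u'.isUnit.mul (Units.oneSub _ hzlt).isUnit).neg)
  -- finish: every `A x` has a preimage in the range
  obtain ⟨w, hw⟩ := hUnitB
  rw [eq_top_iff]
  intro x _
  have hBsurj : ∃ r : R, B r = ⟨A x, hmem x⟩ := by
    refine ⟨(↑w⁻¹ : R →L[ℂ] R) ⟨A x, hmem x⟩, ?_⟩
    have h1 := congrFun (congrArg DFunLike.coe w.mul_inv) (⟨A x, hmem x⟩ : R)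
    rw [hw] at h1
    simpa [ContinuousLinearMap.mul_apply, ContinuousLinearMap.one_apply] using h1
  obtain ⟨r, hr⟩ := hBsurj
  have hAr : A (r : X) = A x := congrArg Subtype.val hr
  have hk : x - (r : X) ∈ LinearMap.ker (A : X →ₗ[ℂ] X) := by
    simp [LinearMap.mem_ker, map_sub, hAr]
  have hx : x = (r : X) + (x - (r : X)) := by abel
  rw [hx]
  exact Submodule.add_mem_sup r.2 hk
end

section
/- Let X be a complex Hilbert space and A : X → X a bounded linear operator with closed range such that σ(A) ∩ R_ω = ∅ for some ray R_ω emanating from the origin. Then A is surjective if and only if A is injective. -/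
open ContinuousLinearMap Complex

local notation "⟪" x ", " y "⟫" => @inner ℂ _ _ x y

/-- Key lemma: a bounded-below operator whose spectrum avoids a ray is a unit. -/
lemma aux_isUnit_of_boundedBelow {X : Type*} [NormedAddCommGroup X]
    [NormedSpace ℂ X] [CompleteSpace X]
    (A : X →L[ℂ] X) (c : ℝ) (hc : 0 < c) (hb : ∀ x, c * ‖x‖ ≤ ‖A x‖)
    (ω : ℝ) (h : ∀ r : ℝ, 0 < r → (r : ℂ) * Complex.exp (ω * Complex.I) ∉ spectrum ℂ A) :
    IsUnit A := by
  rcases subsingleton_or_nontrivial X with hs | hn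
  · haveI : Subsingleton (X →L[ℂ] X) := ⟨fun f g => by ext x; exact Subsingleton.elim _ _⟩
    exact isUnit_of_subsingleton A
  set z : ℂ := ((c / 3 : ℝ) : ℂ) * Complex.exp (ω * Complex.I) with hz
  have habs : ‖z‖ = c / 3 := by
    rw [hz, norm_mul, Complex.norm_exp_ofReal_mul_I]
    rw [mul_one, Complex.norm_real, Real.norm_eq_abs, abs_of_pos (by positivity : (0:ℝ) < c / 3)]
  have hzu : IsUnit (algebraMap ℂ (X →L[ℂ] X) z - A) :=
    spectrum.notMem_iff.mp (h (c / 3) (by positivity))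
  obtain ⟨u, hu⟩ := hzu
  have hlow : ∀ x, (2 * c / 3) * ‖x‖ ≤ ‖(↑u : X →L[ℂ] X) x‖ := by
    intro x
    rw [hu]
    have hax : (algebraMap ℂ (X →L[ℂ] X) z - A) x = z • x - A x := by
      simp [Algebra.algebraMap_eq_smul_one]
    rw [hax, norm_sub_rev]
    have h1 : ‖A x‖ - ‖z • x‖ ≤ ‖A x - z • x‖ := norm_sub_norm_le _ _
    have h2 : ‖z • x‖ = (c / 3) * ‖x‖ := by rw [norm_smul, habs]
    have := hb x
    nlinarith [norm_nonneg x]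
  have hinv : ∀ y, ‖(↑u⁻¹ : X →L[ℂ] X) y‖ ≤ (3 / (2 * c)) * ‖y‖ := by
    intro y
    have h1 := hlow ((↑u⁻¹ : X →L[ℂ] X) y)
    have h2 : (↑u : X →L[ℂ] X) ((↑u⁻¹ : X →L[ℂ] X) y) = y := by
      rw [← ContinuousLinearMap.mul_apply, u.mul_inv, ContinuousLinearMap.one_apply]
    rw [h2] at h1
    rw [div_mul_eq_mul_div, le_div_iff₀ (by positivity : (0:ℝ) < 2 * c)]
    nlinarith [norm_nonneg ((↑u⁻¹ : X →L[ℂ] X) y)]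
  have hnrm : ‖(↑u⁻¹ : X →L[ℂ] X)‖ ≤ 3 / (2 * c) :=
    opNorm_le_bound _ (by positivity) hinv
  set w : X →L[ℂ] X := algebraMap ℂ (X →L[ℂ] X) z * ↑u⁻¹ with hwdef
  have hw : ‖w‖ < 1 := by
    have h1 : ‖w‖ ≤ ‖algebraMap ℂ (X →L[ℂ] X) z‖ * ‖(↑u⁻¹ : X →L[ℂ] X)‖ := norm_mul_le _ _
    have h2 : ‖algebraMap ℂ (X →L[ℂ] X) z‖ = ‖z‖ := norm_algebraMap' _ _
    rw [h2, habs] at h1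
    have h3 : c / 3 * ‖(↑u⁻¹ : X →L[ℂ] X)‖ ≤ c / 3 * (3 / (2 * c)) :=
      mul_le_mul_of_nonneg_left hnrm (by positivity)
    have h4 : c / 3 * (3 / (2 * c)) = 1 / 2 := by field_simp
    linarith
  have hprod : (↑u : X →L[ℂ] X) * (1 - w) = -A := by
    have h1 : (↑u : X →L[ℂ] X) * w = algebraMap ℂ (X →L[ℂ] X) z := by
      rw [hwdef, Algebra.commutes z (↑u⁻¹ : X →L[ℂ] X), ← mul_assoc]
      rw [show ((↑u : X →L[ℂ] X) * ↑u⁻¹) = 1 from u.mul_inv, one_mul]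
    rw [mul_sub, mul_one, h1, hu]
    abel
  have hA : IsUnit (-A) := by
    rw [← hprod]
    exact (u * Units.oneSub w hw).isUnit
  simpa using hA.neg

lemma aux_bijective_of_isUnit {X : Type*} [NormedAddCommGroup X]
    [NormedSpace ℂ X] (A : X →L[ℂ] X) (h : IsUnit A) : Function.Bijective A := by
  obtain ⟨u, hu⟩ := h
  constructor
  · intro a b hab
    have h2 : (↑u⁻¹ : X →L[ℂ] X) ((↑u : X →L[ℂ] X) a)
        = (↑u⁻¹ : X →L[ℂ] X) ((↑u : X →L[ℂ] X) b) := by rw [hu, hab]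
    rwa [← ContinuousLinearMap.mul_apply, ← ContinuousLinearMap.mul_apply, u.inv_mul,
      ContinuousLinearMap.one_apply, ContinuousLinearMap.one_apply] at h2
  · intro y
    refine ⟨(↑u⁻¹ : X →L[ℂ] X) y, ?_⟩
    rw [← hu, ← ContinuousLinearMap.mul_apply, u.mul_inv, ContinuousLinearMap.one_apply]

/-- If `A` has closed range on a Hilbert space and its spectrum misses some ray
emanating from the origin, then `A` is surjective iff it is injective. -/
theorem surjective_iff_injective_of_spectrum_avoids_ray
    (X : Type*) [NormedAddCommGroup X] [InnerProductSpace ℂ X] [CompleteSpace X]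
    (A : X →L[ℂ] X)
    (hR : IsClosed ((LinearMap.range (A : X →ₗ[ℂ] X) : Submodule ℂ X) : Set X))
    (hspec : ∃ ω ∈ Set.Ico (0 : ℝ) (2 * Real.pi),
      ∀ r : ℝ, 0 < r → (r : ℂ) * Complex.exp (ω * Complex.I) ∉ spectrum ℂ A) :
    Function.Surjective A ↔ Function.Injective A := by
  obtain ⟨ω, -, hray⟩ := hspec
  constructor
  · -- surjective → injective, via the adjoint
    intro hsurj
    obtain ⟨C, hC, hCy⟩ := A.exists_preimage_norm_le hsurj
    -- adjoint is bounded below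
    have hb : ∀ y, C⁻¹ * ‖y‖ ≤ ‖(ContinuousLinearMap.adjoint A) y‖ := by
      intro y
      obtain ⟨x, hx, hxn⟩ := hCy y
      have h1 : (‖y‖ : ℝ) * ‖y‖ = RCLike.re (⟪y, y⟫) := (inner_self_eq_norm_mul_norm y).symm
      have h2 : (⟪y, y⟫ : ℂ) = ⟪(ContinuousLinearMap.adjoint A) y, x⟫ := by
        rw [ContinuousLinearMap.adjoint_inner_left, hx]
      have h3 : RCLike.re ((⟪(ContinuousLinearMap.adjoint A) y, x⟫ : ℂ)) ≤
          ‖(ContinuousLinearMap.adjoint A) y‖ * ‖x‖ :=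
        le_trans (RCLike.re_le_norm _) (norm_inner_le_norm _ _)
      have h4 : ‖y‖ * ‖y‖ ≤ ‖(ContinuousLinearMap.adjoint A) y‖ * (C * ‖y‖) := by
        rw [h1, h2]
        exact le_trans h3 (mul_le_mul_of_nonneg_left hxn (norm_nonneg _))
      rcases eq_or_ne y 0 with rfl | hy0
      · simp
      · have hy : 0 < ‖y‖ := norm_pos_iff.mpr hy0
        rw [inv_mul_le_iff₀ hC]
        nlinarith [norm_nonneg ((ContinuousLinearMap.adjoint A) y)]
    -- spectrum of the adjoint avoids the conjugate ray
    have hray' : ∀ r : ℝ, 0 < r →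
        (r : ℂ) * Complex.exp ((-ω : ℝ) * Complex.I) ∉ spectrum ℂ (ContinuousLinearMap.adjoint A) := by
      intro r hr hmem
      have h1 : IsUnit (algebraMap ℂ (X →L[ℂ] X) ((r : ℂ) * Complex.exp (ω * Complex.I)) - A) :=
        spectrum.notMem_iff.mp (hray r hr)
      have h2 := h1.star
      rw [star_sub, ← algebraMap_star_comm, ContinuousLinearMap.star_eq_adjoint] at h2
      have h3 : (starRingEnd ℂ) ((r : ℂ) * Complex.exp ((ω : ℂ) * Complex.I))
          = (r : ℂ) * Complex.exp (((-ω : ℝ) : ℂ) * Complex.I) := by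
        rw [map_mul, ← Complex.exp_conj]
        simp [Complex.conj_I, Complex.conj_ofReal]
      have h3' : star ((r : ℂ) * Complex.exp ((ω : ℂ) * Complex.I))
          = (r : ℂ) * Complex.exp (((-ω : ℝ) : ℂ) * Complex.I) := h3
      rw [h3'] at h2
      exact (spectrum.notMem_iff.mpr h2) hmem
    have hunit : IsUnit (ContinuousLinearMap.adjoint A) :=
      aux_isUnit_of_boundedBelow (ContinuousLinearMap.adjoint A) C⁻¹ (inv_pos.mpr hC) hb (-ω) hray'
    have hunitA : IsUnit A := by
      have h5 := hunit.star
      rwa [ContinuousLinearMap.star_eq_adjoint, ContinuousLinearMap.adjoint_adjoint] at h5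
    exact (aux_bijective_of_isUnit A hunitA).injective
  · -- injective → surjective
    intro hinj
    haveI : CompleteSpace (LinearMap.range (A : X →ₗ[ℂ] X) : Submodule ℂ X) := hR.completeSpace_coe
    set f : X →L[ℂ] (LinearMap.range (A : X →ₗ[ℂ] X) : Submodule ℂ X) :=
      A.codRestrict (LinearMap.range (A : X →ₗ[ℂ] X)) (fun x => LinearMap.mem_range_self _ x) with hf
    have hker : LinearMap.ker (f : X →ₗ[ℂ] (LinearMap.range (A : X →ₗ[ℂ] X) : Submodule ℂ X)) = ⊥ := by
      rw [hf, ContinuousLinearMap.ker_codRestrict]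
      exact LinearMap.ker_eq_bot.mpr hinj
    have hrange : LinearMap.range (f : X →ₗ[ℂ] (LinearMap.range (A : X →ₗ[ℂ] X) : Submodule ℂ X)) = ⊤ := by
      rw [LinearMap.range_eq_top]
      rintro ⟨y, x, hx⟩
      exact ⟨x, Subtype.ext hx⟩
    set e := ContinuousLinearEquiv.ofBijective f hker hrange with he
    set K : NNReal := ‖(e.symm : (LinearMap.range (A : X →ₗ[ℂ] X) : Submodule ℂ X) →L[ℂ] X)‖₊ with hK
    have hbb : ∀ x, ((K : ℝ) + 1)⁻¹ * ‖x‖ ≤ ‖A x‖ := by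
      intro x
      have h1 := e.antilipschitz.le_mul_dist x 0
      rw [dist_zero_right, map_zero, dist_zero_right] at h1
      have h2 : ‖e x‖ = ‖A x‖ := by
        rw [he, ContinuousLinearEquiv.coeFn_ofBijective]
        rfl
      rw [h2] at h1
      have hK1 : (0:ℝ) < (K : ℝ) + 1 := by positivity
      rw [inv_mul_le_iff₀ hK1]
      calc ‖x‖ ≤ (K : ℝ) * ‖A x‖ := h1
        _ ≤ ((K : ℝ) + 1) * ‖A x‖ :=
          mul_le_mul_of_nonneg_right (by linarith) (norm_nonneg _)
    have hunit : IsUnit A :=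
      aux_isUnit_of_boundedBelow A (((K : ℝ) + 1)⁻¹) (by positivity) hbb ω hray
    exact (aux_bijective_of_isUnit A hunit).surjective
end

section
/- Let X be a Banach space and M, N closed subspaces with M ⊄ N and M ∩ N = {0}. Then γ(M, N) = inf{dist(x, N)/‖x‖ : 0 ≠ x ∈ M}, and γ(M, N) > 0 if and only if M + N is closed. -/
set_option maxHeartbeats 1000000

open Metric

theorem aux_closed_of_bound
    (X : Type*) [NormedAddCommGroup X] [NormedSpace ℂ X] [CompleteSpace X]
    (M N : Submodule ℂ X)
    (hM : IsClosed (M : Set X)) (hN : IsClosed (N : Set X))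
    {c : ℝ} (hc : 0 < c) (h : ∀ m ∈ M, c * ‖m‖ ≤ infDist m (N : Set X)) :
    IsClosed ((M ⊔ N : Submodule ℂ X) : Set X) := by
  haveI := hM.completeSpace_coe
  haveI := hN.completeSpace_coe
  set f : (M × N) →L[ℂ] X :=
    M.subtypeL.comp (ContinuousLinearMap.fst ℂ M N) +
      N.subtypeL.comp (ContinuousLinearMap.snd ℂ M N) with hfdef
  have hf : ∀ p : M × N, f p = (p.1 : X) + (p.2 : X) := fun p => rfl
  have key : ∀ (m : M) (n : N), c * ‖(m : X)‖ ≤ ‖(m : X) + (n : X)‖ := by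
    intro m n
    calc c * ‖(m : X)‖ ≤ infDist (m : X) (N : Set X) := h m m.2
      _ ≤ dist (m : X) (-(n : X)) := infDist_le_dist_of_mem (neg_mem n.2)
      _ = ‖(m : X) + (n : X)‖ := by rw [dist_eq_norm, sub_neg_eq_add]
  have hbound : ∀ p : M × N, ‖p‖ ≤ (1 / c + 1) * ‖f p‖ := by
    intro p
    have h1 : ‖(p.1 : X)‖ ≤ (1 / c) * ‖f p‖ := by
      rw [hf p, div_mul_eq_mul_div, one_mul, le_div_iff₀ hc, mul_comm]
      exact key p.1 p.2
    have h2 : ‖(p.2 : X)‖ ≤ (1 / c + 1) * ‖f p‖ := by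
      have : ‖(p.2 : X)‖ ≤ ‖(p.1 : X) + (p.2 : X)‖ + ‖(p.1 : X)‖ := by
        calc ‖(p.2 : X)‖ = ‖((p.1 : X) + (p.2 : X)) - (p.1 : X)‖ := by rw [add_sub_cancel_left]
          _ ≤ _ := norm_sub_le _ _
      rw [hf p]
      calc ‖(p.2 : X)‖ ≤ ‖(p.1 : X) + (p.2 : X)‖ + ‖(p.1 : X)‖ := this
        _ ≤ ‖(p.1 : X) + (p.2 : X)‖ + (1 / c) * ‖(p.1 : X) + (p.2 : X)‖ := by
            have := h1; rw [hf p] at this; linarith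
        _ = (1 / c + 1) * ‖(p.1 : X) + (p.2 : X)‖ := by ring
    have hnn : (0 : ℝ) ≤ ‖f p‖ := norm_nonneg _
    have hc' : (0 : ℝ) < 1 / c := by positivity
    rw [Prod.norm_def]
    apply max_le
    · calc ‖p.1‖ = ‖(p.1 : X)‖ := rfl
        _ ≤ (1 / c) * ‖f p‖ := h1
        _ ≤ (1 / c + 1) * ‖f p‖ := by nlinarith
    · calc ‖p.2‖ = ‖(p.2 : X)‖ := rfl
        _ ≤ (1 / c + 1) * ‖f p‖ := h2
  have hK : (0 : ℝ) ≤ 1 / c + 1 := by positivity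
  have hanti : AntilipschitzWith (1 / c + 1).toNNReal f :=
    f.antilipschitz_of_bound fun x => by
      rw [Real.coe_toNNReal _ hK]; exact hbound x
  have hrange : Set.range f = ((M ⊔ N : Submodule ℂ X) : Set X) := by
    ext x
    constructor
    · rintro ⟨p, rfl⟩
      exact Submodule.add_mem_sup p.1.2 p.2.2
    · intro hx
      rcases Submodule.mem_sup.1 hx with ⟨m, hm, n, hn, rfl⟩
      exact ⟨(⟨m, hm⟩, ⟨n, hn⟩), rfl⟩
  rw [← hrange]
  exact hanti.isClosed_range f.uniformContinuous

theorem aux_bound_of_closed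
    (X : Type*) [NormedAddCommGroup X] [NormedSpace ℂ X] [CompleteSpace X]
    (M N : Submodule ℂ X)
    (hM : IsClosed (M : Set X)) (hN : IsClosed (N : Set X))
    (hdisj : M ⊓ N = ⊥)
    (hsum : IsClosed ((M ⊔ N : Submodule ℂ X) : Set X)) :
    ∃ c > (0 : ℝ), ∀ m ∈ M, c * ‖m‖ ≤ infDist m (N : Set X) := by
  haveI := hM.completeSpace_coe
  haveI := hN.completeSpace_coe
  haveI := hsum.completeSpace_coe
  set f : (M × N) →L[ℂ] X :=
    M.subtypeL.comp (ContinuousLinearMap.fst ℂ M N) +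
      N.subtypeL.comp (ContinuousLinearMap.snd ℂ M N) with hfdef
  have hf : ∀ p : M × N, f p = (p.1 : X) + (p.2 : X) := fun p => rfl
  have hmem : ∀ p : M × N, f p ∈ M ⊔ N := fun p =>
    Submodule.add_mem_sup p.1.2 p.2.2
  set g : (M × N) →L[ℂ] (M ⊔ N : Submodule ℂ X) := f.codRestrict _ hmem with hgdef
  have hg : ∀ p : M × N, (g p : X) = (p.1 : X) + (p.2 : X) := fun p => rfl
  have hker : LinearMap.ker (g : (M × N) →ₗ[ℂ] (M ⊔ N : Submodule ℂ X)) = ⊥ := by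
    rw [LinearMap.ker_eq_bot']
    intro p hp
    have hp' : (p.1 : X) + (p.2 : X) = 0 := by
      have := congrArg (Subtype.val) hp
      simpa [hg] using this
    have h1 : (p.1 : X) ∈ M ⊓ N := by
      refine ⟨p.1.2, ?_⟩
      have : (p.1 : X) = -(p.2 : X) := eq_neg_of_add_eq_zero_left hp'
      rw [this]; exact neg_mem p.2.2
    rw [hdisj, Submodule.mem_bot] at h1
    have h2 : (p.2 : X) = 0 := by rw [h1] at hp'; simpa using hp'
    ext
    · exact h1
    · exact h2
  have hrange : LinearMap.range (g : (M × N) →ₗ[ℂ] (M ⊔ N : Submodule ℂ X)) = ⊤ := by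
    rw [LinearMap.range_eq_top]
    rintro ⟨y, hy⟩
    rcases Submodule.mem_sup.1 hy with ⟨m, hm, n, hn, rfl⟩
    exact ⟨(⟨m, hm⟩, ⟨n, hn⟩), rfl⟩
  set e := ContinuousLinearEquiv.ofBijective g hker hrange with hedef
  set C : ℝ := max ‖(e.symm : (M ⊔ N : Submodule ℂ X) →L[ℂ] M × N)‖ 1 with hCdef
  have hC1 : (1 : ℝ) ≤ C := le_max_right _ _
  have hC0 : (0 : ℝ) < C := lt_of_lt_of_le one_pos hC1
  have hbd : ∀ (m : M) (n : N), ‖(m : X)‖ ≤ C * ‖(m : X) + (n : X)‖ := by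
    intro m n
    set p : M × N := (m, n) with hp
    have h1 : ‖(m : X)‖ ≤ ‖p‖ := norm_fst_le p
    have h2 : e.symm (g p) = p := e.symm_apply_apply p
    have h3 : ‖p‖ ≤ ‖(e.symm : (M ⊔ N : Submodule ℂ X) →L[ℂ] M × N)‖ * ‖g p‖ := by
      calc ‖p‖ = ‖(e.symm : (M ⊔ N : Submodule ℂ X) →L[ℂ] M × N) (g p)‖ := by
            rw [show ((e.symm : (M ⊔ N : Submodule ℂ X) →L[ℂ] M × N) (g p)) = e.symm (g p) from rfl, h2]
        _ ≤ _ := ContinuousLinearMap.le_opNorm _ _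
    have h4 : ‖g p‖ = ‖(m : X) + (n : X)‖ := rfl
    have h5 : ‖(e.symm : (M ⊔ N : Submodule ℂ X) →L[ℂ] M × N)‖ ≤ C := le_max_left _ _
    calc ‖(m : X)‖ ≤ ‖(e.symm : (M ⊔ N : Submodule ℂ X) →L[ℂ] M × N)‖ * ‖g p‖ := h1.trans h3
      _ ≤ C * ‖g p‖ := by
          exact mul_le_mul_of_nonneg_right h5 (norm_nonneg _)
      _ = C * ‖(m : X) + (n : X)‖ := by rw [h4]
  refine ⟨1 / C, by positivity, ?_⟩
  intro m hm
  have hNne : (N : Set X).Nonempty := ⟨0, N.zero_mem⟩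
  by_contra hcon
  push_neg at hcon
  rcases (infDist_lt_iff hNne).1 hcon with ⟨y, hy, hlt⟩
  have hb := hbd ⟨m, hm⟩ ⟨-y, neg_mem hy⟩
  simp only [Submodule.coe_mk] at hb
  rw [dist_eq_norm, ← sub_eq_add_neg] at *
  have h6 : C * ‖m - y‖ < C * (1 / C * ‖m‖) := mul_lt_mul_of_pos_left hlt hC0
  have h7 : C * (1 / C * ‖m‖) = ‖m‖ := by field_simp
  linarith

/-- Kato's gap quantity: for closed subspaces `M, N` with `M ⊄ N` and `M ∩ N = {0}`,
`γ(M, N) = inf{dist(x, N)/‖x‖ : 0 ≠ x ∈ M}`, and `γ(M, N) > 0` iff `M + N` is closed. -/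
theorem gap_positive_iff_sum_closed
    (X : Type*) [NormedAddCommGroup X] [NormedSpace ℂ X] [CompleteSpace X]
    (M N : Submodule ℂ X)
    (hM : IsClosed (M : Set X)) (hN : IsClosed (N : Set X))
    (hMN : ¬ M ≤ N) (hdisj : M ⊓ N = ⊥) :
    sInf {r : ℝ | ∃ x ∈ M, x ∉ N ∧
        r = Metric.infDist x (N : Set X) / Metric.infDist x ((M ⊓ N : Submodule ℂ X) : Set X)} =
      sInf {r : ℝ | ∃ x ∈ M, x ≠ 0 ∧ r = Metric.infDist x (N : Set X) / ‖x‖} ∧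
    (0 < sInf {r : ℝ | ∃ x ∈ M, x ∉ N ∧
        r = Metric.infDist x (N : Set X) / Metric.infDist x ((M ⊓ N : Submodule ℂ X) : Set X)} ↔
      IsClosed ((M ⊔ N : Submodule ℂ X) : Set X)) := by
  have hset : {r : ℝ | ∃ x ∈ M, x ∉ N ∧
      r = Metric.infDist x (N : Set X) / Metric.infDist x ((M ⊓ N : Submodule ℂ X) : Set X)} =
      {r : ℝ | ∃ x ∈ M, x ≠ 0 ∧ r = Metric.infDist x (N : Set X) / ‖x‖} := by
    ext r
    simp only [Set.mem_setOf_eq, hdisj, Submodule.bot_coe, infDist_singleton, dist_zero_right]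
    constructor
    · rintro ⟨x, hxM, hxN, rfl⟩
      exact ⟨x, hxM, fun h0 => hxN (h0 ▸ N.zero_mem), rfl⟩
    · rintro ⟨x, hxM, hx0, rfl⟩
      refine ⟨x, hxM, fun hxN => hx0 ?_, rfl⟩
      have : x ∈ M ⊓ N := ⟨hxM, hxN⟩
      rwa [hdisj, Submodule.mem_bot] at this
  rw [hset]
  refine ⟨rfl, ?_⟩
  set S := {r : ℝ | ∃ x ∈ M, x ≠ 0 ∧ r = Metric.infDist x (N : Set X) / ‖x‖} with hSdef
  obtain ⟨x₀, hx₀M, hx₀N⟩ := SetLike.not_le_iff_exists.1 hMN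
  have hx₀0 : x₀ ≠ 0 := fun h0 => hx₀N (h0 ▸ N.zero_mem)
  have hSne : S.Nonempty := ⟨_, x₀, hx₀M, hx₀0, rfl⟩
  have hSbd : BddBelow S := by
    refine ⟨0, ?_⟩
    rintro r ⟨x, hxM, hx0, rfl⟩
    exact div_nonneg infDist_nonneg (norm_nonneg _)
  constructor
  · intro hpos
    refine aux_closed_of_bound X M N hM hN hpos ?_
    intro m hm
    rcases eq_or_ne m 0 with rfl | hm0
    · simpa using infDist_nonneg
    · have hmem : Metric.infDist m (N : Set X) / ‖m‖ ∈ S := ⟨m, hm, hm0, rfl⟩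
      have := csInf_le hSbd hmem
      have hnorm : (0 : ℝ) < ‖m‖ := norm_pos_iff.2 hm0
      rw [le_div_iff₀ hnorm] at this
      exact this
  · intro hclosed
    obtain ⟨c, hc, hbd⟩ := aux_bound_of_closed X M N hM hN hdisj hclosed
    have : c ≤ sInf S := by
      apply le_csInf hSne
      rintro r ⟨x, hxM, hx0, rfl⟩
      have hnorm : (0 : ℝ) < ‖x‖ := norm_pos_iff.2 hx0
      rw [le_div_iff₀ hnorm]
      exact hbd x hxM
    exact hc.trans_le this
end
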